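/- Let C = {C_1,…,C_K} be a clustering of {1,…,n} and let A(t), t ≥ 0, be a sequence of n×n stochastic matrices satisfying: (B1) there exists e > 0 such that for all i, j, t, either A_{ij}(t) = 0 or A_{ij}(t) ≥ e; (B2) A_{ii}(t) ≥ e for all i and t; (B3*, static inter-cluster common influence) there exists a K×K stochastic matrix B = [b_{pq}] such that Σ_{j∈C_q} A_{ij}(t) = b_{pq} for all t ≥ 0, all i ∈ C_p and all p, q. Suppose there exists an integer L > 0 such that for every t ≥ 0 the matrix Σ_{s=t}^{t+L−1} A(s) has cluster-spanning-trees w.r.t. C. Then for every x ∈ ℝ^n there exists y ∈ S_C such that the left products applied to x − y vanish: A(t) A(t−1) ··· A(0) (x − y) → 0 as t → ∞. Equivalently, ℝ^n = S_C + {v ∈ ℝ^n : lim_{t→∞} A(t) A(t−1) ··· A(0) v = 0}. -/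

import Mathlib

open Finset Filter Topology Matrix

/-- An `n × n` real matrix is stochastic if all entries are nonnegative and
every row sums to `1`. -/
def IsStochastic {n : ℕ} (A : Matrix (Fin n) (Fin n) ℝ) : Prop :=
  (∀ i j, 0 ≤ A i j) ∧ ∀ i, ∑ j, A i j = 1

/-- A clustering of `{1,…,n}`: pairwise disjoint subsets whose union is everything. -/
def IsClustering {n K : ℕ} (C : Fin K → Finset (Fin n)) : Prop :=
  (∀ p q, p ≠ q → Disjoint (C p) (C q)) ∧ ∀ i, ∃ p, i ∈ C p

/-- Reachability along directed edges of `G(A)`: edge from `j` to `i` iff `A i j > 0`. -/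
def Reaches {n : ℕ} (A : Matrix (Fin n) (Fin n) ℝ) : Fin n → Fin n → Prop :=
  Relation.ReflTransGen fun j i => 0 < A i j

/-- `A` has cluster-spanning-trees w.r.t. `C`: for each cluster there is a vertex from
which every vertex of the cluster is reachable in `G(A)`. -/
def HasClusterSpanningTrees {n K : ℕ} (C : Fin K → Finset (Fin n))
    (A : Matrix (Fin n) (Fin n) ℝ) : Prop :=
  ∀ p, ∃ v, ∀ i ∈ C p, Reaches A v i

/-- Inter-cluster common influence: `∑_{j ∈ C q} A i j` is the same for all `i ∈ C p`. -/
def InterClusterCommonInfluence {n K : ℕ} (C : Fin K → Finset (Fin n))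
    (A : Matrix (Fin n) (Fin n) ℝ) : Prop :=
  ∀ p q, ∀ i ∈ C p, ∀ i' ∈ C p, ∑ j ∈ C q, A i j = ∑ j ∈ C q, A i' j

/-- Cluster ergodicity coefficient
`μ_C(A) = min_p min_{i,j ∈ C p} ∑_k min (A i k) (A j k)`. -/
noncomputable def muC {n K : ℕ} (C : Fin K → Finset (Fin n))
    (A : Matrix (Fin n) (Fin n) ℝ) : ℝ :=
  sInf {s | ∃ p, ∃ i ∈ C p, ∃ j ∈ C p, s = ∑ k, min (A i k) (A j k)}

/-- Cluster Hajnal diameter `Δ_C(A) = max_p max_{i,j ∈ C p} max_k |A i k - A j k|`. -/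
noncomputable def DeltaC {n K : ℕ} (C : Fin K → Finset (Fin n))
    (A : Matrix (Fin n) (Fin n) ℝ) : ℝ :=
  sSup {d | ∃ p, ∃ i ∈ C p, ∃ j ∈ C p, ∃ k, d = |A i k - A j k|}

/-- The cluster-consensus subspace `S_C`. -/
def SC {n K : ℕ} (C : Fin K → Finset (Fin n)) : Set (Fin n → ℝ) :=
  {x | ∀ p, ∀ i ∈ C p, ∀ j ∈ C p, x i = x j}

/-- Left product `prodFrom A a m = A (a+m-1) * ⋯ * A (a+1) * A a` (with `m` factors). -/
def prodFrom {n : ℕ} (A : ℕ → Matrix (Fin n) (Fin n) ℝ) (a : ℕ) :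
    ℕ → Matrix (Fin n) (Fin n) ℝ
  | 0 => 1
  | m + 1 => A (a + m) * prodFrom A a m


open scoped Classical


/-! ### basic product lemmas -/

lemma stoch_mul {n : ℕ} {M N : Matrix (Fin n) (Fin n) ℝ} (hM : IsStochastic M)
    (hN : IsStochastic N) : IsStochastic (M * N) := by
  constructor
  · intro i j
    simp only [Matrix.mul_apply]
    exact Finset.sum_nonneg fun k _ => mul_nonneg (hM.1 i k) (hN.1 k j)
  · intro i
    simp only [Matrix.mul_apply]
    rw [Finset.sum_comm]
    have : ∀ k, (∑ j, M i k * N k j) = M i k := by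
      intro k; rw [← Finset.mul_sum, hN.2 k, mul_one]
    simp only [this]; exact hM.2 i

lemma stoch_one {n : ℕ} : IsStochastic (1 : Matrix (Fin n) (Fin n) ℝ) := by
  constructor
  · intro i j
    by_cases h : i = j <;> simp [Matrix.one_apply, h]
  · intro i; simp [Matrix.one_apply]

lemma prodFrom_stoch {n : ℕ} {A : ℕ → Matrix (Fin n) (Fin n) ℝ}
    (hA : ∀ t, IsStochastic (A t)) (a m : ℕ) : IsStochastic (prodFrom A a m) := by
  induction m with
  | zero => exact stoch_one
  | succ m ih => exact stoch_mul (hA _) ih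

lemma prodFrom_add {n : ℕ} (A : ℕ → Matrix (Fin n) (Fin n) ℝ) (a m m' : ℕ) :
    prodFrom A a (m + m') = prodFrom A (a + m) m' * prodFrom A a m := by
  induction m' with
  | zero => simp [prodFrom]
  | succ m' ih =>
      show A (a + (m + m')) * prodFrom A a (m + m') =
        A (a + m + m') * prodFrom A (a + m) m' * prodFrom A a m
      rw [ih, add_assoc, Matrix.mul_assoc]

/-- single-entry lower bound for a product of nonneg matrices -/
lemma mul_entry_ge {n : ℕ} {M N : Matrix (Fin n) (Fin n) ℝ}
    (hM : ∀ i j, 0 ≤ M i j) (hN : ∀ i j, 0 ≤ N i j) (i k j : Fin n) :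
    M i k * N k j ≤ (M * N) i j := by
  rw [Matrix.mul_apply]
  exact Finset.single_le_sum (f := fun k => M i k * N k j)
    (fun c _ => mul_nonneg (hM i c) (hN c j)) (Finset.mem_univ k)

lemma prodFrom_nonneg {n : ℕ} {A : ℕ → Matrix (Fin n) (Fin n) ℝ}
    (hA : ∀ t, IsStochastic (A t)) (a m : ℕ) : ∀ i j, 0 ≤ prodFrom A a m i j :=
  (prodFrom_stoch hA a m).1

lemma prodFrom_diag {n : ℕ} {A : ℕ → Matrix (Fin n) (Fin n) ℝ}
    (hA : ∀ t, IsStochastic (A t)) {e : ℝ} (he : 0 ≤ e)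
    (hB2 : ∀ t i, e ≤ A t i i) (a m : ℕ) (i : Fin n) :
    e ^ m ≤ prodFrom A a m i i := by
  induction m with
  | zero => simp [prodFrom, Matrix.one_apply]
  | succ m ih =>
      calc e ^ (m + 1) = e * e ^ m := by ring
      _ ≤ A (a + m) i i * prodFrom A a m i i :=
        mul_le_mul (hB2 _ i) ih (by positivity) (le_trans he (hB2 _ i))
      _ ≤ _ := mul_entry_ge (hA _).1 (prodFrom_nonneg hA a m) i i i

lemma prodFrom_edge {n : ℕ} {A : ℕ → Matrix (Fin n) (Fin n) ℝ}
    (hA : ∀ t, IsStochastic (A t)) {e : ℝ} (he : 0 ≤ e)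
    (hB2 : ∀ t i, e ≤ A t i i) (a m s : ℕ) (hs1 : a ≤ s) (hs2 : s < a + m)
    (i j : Fin n) : e ^ (m - 1) * A s i j ≤ prodFrom A a m i j := by
  induction m with
  | zero => omega
  | succ m ih =>
      rcases Nat.lt_or_ge s (a + m) with h | h
      · have hm : 1 ≤ m := by omega
        calc e ^ (m + 1 - 1) * A s i j = e * (e ^ (m - 1) * A s i j) := by
              rw [show m + 1 - 1 = 1 + (m - 1) by omega, pow_add, pow_one]; ring
        _ ≤ A (a + m) i i * (prodFrom A a m i j) := by
              apply mul_le_mul (hB2 _ i) (ih h) _ (le_trans he (hB2 _ i))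
              exact mul_nonneg (by positivity) ((hA s).1 i j)
        _ ≤ _ := mul_entry_ge (hA _).1 (prodFrom_nonneg hA a m) i i j
      · have hs : s = a + m := by omega
        subst hs
        calc e ^ (m + 1 - 1) * A (a + m) i j = A (a + m) i j * e ^ m := by
              rw [Nat.add_sub_cancel]; ring
        _ ≤ A (a + m) i j * prodFrom A a m j j := by
              apply mul_le_mul_of_nonneg_left (prodFrom_diag hA he hB2 a m j) ((hA _).1 i j)
        _ ≤ _ := mul_entry_ge (hA _).1 (prodFrom_nonneg hA a m) i j j

/-- bound on mulVec by sup of entries, for stochastic matrices -/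
lemma stoch_mulVec_bound {n : ℕ} {M : Matrix (Fin n) (Fin n) ℝ} (hM : IsStochastic M)
    {x : Fin n → ℝ} {c : ℝ} (hx : ∀ j, |x j| ≤ c) (i : Fin n) : |M.mulVec x i| ≤ c := by
  have h0 : 0 ≤ c := le_trans (abs_nonneg _) (hx i)
  calc |M.mulVec x i| ≤ ∑ j, |M i j * x j| := by
        rw [Matrix.mulVec]; exact Finset.abs_sum_le_sum_abs _ _
  _ ≤ ∑ j, M i j * c := by
        apply Finset.sum_le_sum; intro j _
        rw [abs_mul, abs_of_nonneg (hM.1 i j)]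
        exact mul_le_mul_of_nonneg_left (hx j) (hM.1 i j)
  _ = c := by rw [← Finset.sum_mul, hM.2 i, one_mul]


section part2
variable {n K : ℕ} {C : Fin K → Finset (Fin n)}

/-- partition of a sum over all indices into clusters -/
lemma cluster_sum (hC : IsClustering C) (f : Fin n → ℝ) :
    ∑ k, f k = ∑ p, ∑ k ∈ C p, f k := by
  classical
  have hcl : ∀ k : Fin n, ∃ p, k ∈ C p := hC.2
  choose cl hcl using hcl
  have huniq : ∀ (k : Fin n) (p : Fin K), k ∈ C p → cl k = p := by
    intro k p hk
    by_contra hne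
    exact (Finset.disjoint_left.mp (hC.1 _ _ hne) (hcl k)) hk
  have hCp : ∀ p, C p = Finset.univ.filter (fun k => cl k = p) := by
    intro p; ext k
    simp only [Finset.mem_filter, Finset.mem_univ, true_and]
    constructor
    · exact huniq k p
    · rintro rfl; exact hcl k
  rw [← Finset.sum_fiberwise Finset.univ cl f]
  exact Finset.sum_congr rfl fun p _ => by rw [hCp p]

/-- zero-sum Hajnal bound -/
lemma zero_sum_bound {ι : Type*} [DecidableEq ι] (F : Finset ι) (c x : ι → ℝ)
    (h0 : ∑ k ∈ F, c k = 0) {D : ℝ} (hD : 0 ≤ D)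
    (hx : ∀ k ∈ F, ∀ k' ∈ F, |x k - x k'| ≤ D) :
    |∑ k ∈ F, c k * x k| ≤ (∑ k ∈ F, |c k|) / 2 * D := by
  classical
  set Fp := F.filter (fun k => 0 ≤ c k) with hFp
  set Fm := F.filter (fun k => c k < 0) with hFm
  have hsplit : Fp ∪ Fm = F := by
    ext k; simp only [hFp, hFm, Finset.mem_union, Finset.mem_filter]
    constructor
    · rintro (⟨h, _⟩ | ⟨h, _⟩) <;> exact h
    · intro h; rcases le_or_gt 0 (c k) with h' | h'
      · exact Or.inl ⟨h, h'⟩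
      · exact Or.inr ⟨h, h'⟩
  have hdisj : Disjoint Fp Fm := by
    simp only [hFp, hFm, Finset.disjoint_left, Finset.mem_filter]
    rintro k ⟨_, h1⟩ ⟨_, h2⟩; linarith
  set S := ∑ k ∈ Fp, c k with hS
  have hsum2 : ∑ k ∈ Fp, c k + ∑ k ∈ Fm, c k = 0 := by
    rw [← Finset.sum_union hdisj, hsplit, h0]
  have hSm : ∑ k ∈ Fm, c k = -S := by linarith
  have hSnonneg : 0 ≤ S :=
    Finset.sum_nonneg fun k hk => (Finset.mem_filter.mp hk).2
  have habs : ∑ k ∈ F, |c k| = 2 * S := by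
    rw [← hsplit, Finset.sum_union hdisj]
    have h1 : ∑ k ∈ Fp, |c k| = S :=
      Finset.sum_congr rfl fun k hk => abs_of_nonneg (Finset.mem_filter.mp hk).2
    have h2 : ∑ k ∈ Fm, |c k| = S := by
      rw [show S = -∑ k ∈ Fm, c k by linarith, ← Finset.sum_neg_distrib]
      exact Finset.sum_congr rfl fun k hk => abs_of_neg (Finset.mem_filter.mp hk).2
    rw [h1, h2]; ring
  rcases eq_or_lt_of_le hSnonneg with hS0 | hSpos
  · -- S = 0 : all coefficients vanish
    have hp0 : ∀ k ∈ Fp, c k = 0 := by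
      intro k hk
      exact (Finset.sum_eq_zero_iff_of_nonneg
        (fun k hk => (Finset.mem_filter.mp hk).2)).mp hS0.symm k hk
    have hm0 : Fm = ∅ := by
      by_contra hne
      have hlt : ∑ k ∈ Fm, c k < 0 :=
        Finset.sum_neg (fun k hk => (Finset.mem_filter.mp hk).2)
          (Finset.nonempty_of_ne_empty hne)
      rw [hSm, ← hS0] at hlt; simp at hlt
    have hall : ∀ k ∈ F, c k = 0 := by
      intro k hk
      rw [← hsplit] at hk
      rcases Finset.mem_union.mp hk with h | h
      · exact hp0 k h
      · rw [hm0] at h; simp at h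
    have h1 : ∑ k ∈ F, c k * x k = 0 :=
      Finset.sum_eq_zero fun k hk => by rw [hall k hk, zero_mul]
    rw [h1, habs, ← hS0]
    simp
  · -- S > 0
    have hmS : ∑ k' ∈ Fm, -c k' = S := by
      rw [Finset.sum_neg_distrib, hSm, neg_neg]
    have inner : ∀ k, ∑ k' ∈ Fm, c k * (-c k') * (x k - x k')
        = c k * x k * S + c k * (∑ k' ∈ Fm, c k' * x k') := by
      intro k
      have h : ∀ k' ∈ Fm, c k * (-c k') * (x k - x k')
          = (c k * x k) * (-c k') + c k * (c k' * x k') := fun k' _ => by ring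
      rw [Finset.sum_congr rfl h, Finset.sum_add_distrib, ← Finset.mul_sum,
        ← Finset.mul_sum, hmS]
    have key : ∑ k ∈ Fp, ∑ k' ∈ Fm, c k * (-c k') * (x k - x k')
        = S * ∑ k ∈ F, c k * x k := by
      rw [Finset.sum_congr rfl fun k _ => inner k, Finset.sum_add_distrib,
        ← Finset.sum_mul, ← Finset.sum_mul, ← hsplit, Finset.sum_union hdisj]
      ring
    have bound : |∑ k ∈ Fp, ∑ k' ∈ Fm, c k * (-c k') * (x k - x k')| ≤ S * S * D := by
      calc |∑ k ∈ Fp, ∑ k' ∈ Fm, c k * (-c k') * (x k - x k')|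
          ≤ ∑ k ∈ Fp, |∑ k' ∈ Fm, c k * (-c k') * (x k - x k')| :=
            Finset.abs_sum_le_sum_abs _ _
        _ ≤ ∑ k ∈ Fp, ∑ k' ∈ Fm, |c k * (-c k') * (x k - x k')| :=
            Finset.sum_le_sum fun k _ => Finset.abs_sum_le_sum_abs _ _
        _ ≤ ∑ k ∈ Fp, ∑ k' ∈ Fm, c k * (-c k') * D := by
            apply Finset.sum_le_sum; intro k hk
            apply Finset.sum_le_sum; intro k' hk'
            have hck : 0 ≤ c k := (Finset.mem_filter.mp hk).2
            have hck' : 0 ≤ -c k' := by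
              have := (Finset.mem_filter.mp hk').2; linarith
            rw [abs_mul, abs_mul, abs_of_nonneg hck, abs_of_nonneg hck']
            exact mul_le_mul_of_nonneg_left
              (hx k (Finset.mem_filter.mp hk).1 k' (Finset.mem_filter.mp hk').1)
              (mul_nonneg hck hck')
        _ = S * S * D := by
            have h1 : ∀ k : ι, ∑ k' ∈ Fm, c k * -c k' * D = c k * (S * D) := by
              intro k
              calc ∑ k' ∈ Fm, c k * -c k' * D = ∑ k' ∈ Fm, (c k * D) * -c k' :=
                    Finset.sum_congr rfl fun k' _ => by ring
                _ = (c k * D) * S := by rw [← Finset.mul_sum, hmS]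
                _ = c k * (S * D) := by ring
            rw [Finset.sum_congr rfl fun k _ => h1 k, ← Finset.sum_mul]
            ring
    rw [key, abs_mul, abs_of_pos hSpos] at bound
    have bound' : S * |∑ k ∈ F, c k * x k| ≤ S * (S * D) := by linarith
    have hfin : |∑ k ∈ F, c k * x k| ≤ S * D := (mul_le_mul_iff_right₀ hSpos).mp bound'
    calc |∑ k ∈ F, c k * x k| ≤ S * D := hfin
      _ = (∑ k ∈ F, |c k|) / 2 * D := by rw [habs]; ring

end part2

section part3
variable {n K : ℕ} {C : Fin K → Finset (Fin n)}

/-- Hajnal-type contraction step. -/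
lemma contraction_step (hC : IsClustering C) {M : Matrix (Fin n) (Fin n) ℝ}
    (hM : IsStochastic M) (hcom : InterClusterCommonInfluence C M) {p : Fin K} {i j : Fin n}
    (hi : i ∈ C p) (hj : j ∈ C p) {γ : ℝ} (hγ : 0 ≤ γ) {v : Fin n}
    (hv1 : γ ≤ M i v) (hv2 : γ ≤ M j v) {x : Fin n → ℝ} {D : ℝ} (hD : 0 ≤ D)
    (hx : ∀ q, ∀ k ∈ C q, ∀ k' ∈ C q, |x k - x k'| ≤ D) :
    |M.mulVec x i - M.mulVec x j| ≤ (1 - γ) * D := by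
  classical
  set c : Fin n → ℝ := fun k => M i k - M j k with hc
  have hdiff : M.mulVec x i - M.mulVec x j = ∑ k, c k * x k := by
    simp only [Matrix.mulVec, dotProduct, hc, ← Finset.sum_sub_distrib]
    exact Finset.sum_congr rfl fun k _ => by ring
  have habs_le : ∑ k, |c k| ≤ 2 - 2 * γ := by
    have hmin : ∀ k, |c k| = M i k + M j k - 2 * min (M i k) (M j k) := by
      intro k
      rcases le_total (M i k) (M j k) with h | h
      · rw [abs_of_nonpos (by simp [hc]; linarith), min_eq_left h]; simp [hc]; ring
      · rw [abs_of_nonneg (by simp [hc]; linarith), min_eq_right h]; simp [hc]; ring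
    rw [Finset.sum_congr rfl fun k _ => hmin k]
    have hsum : ∑ k, (M i k + M j k - 2 * min (M i k) (M j k))
        = 2 - 2 * ∑ k, min (M i k) (M j k) := by
      rw [Finset.sum_sub_distrib, Finset.sum_add_distrib, hM.2 i, hM.2 j, ← Finset.mul_sum]
      ring
    rw [hsum]
    have : γ ≤ ∑ k, min (M i k) (M j k) := by
      calc γ ≤ min (M i v) (M j v) := le_min hv1 hv2
        _ ≤ ∑ k, min (M i k) (M j k) :=
          Finset.single_le_sum (f := fun k => min (M i k) (M j k))
            (fun k _ => le_min (hM.1 i k) (hM.1 j k)) (Finset.mem_univ v)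
    linarith
  have hzero : ∀ q, ∑ k ∈ C q, c k = 0 := by
    intro q
    have := hcom p q i hi j hj
    simp only [hc, Finset.sum_sub_distrib]
    linarith
  calc |M.mulVec x i - M.mulVec x j| = |∑ k, c k * x k| := by rw [hdiff]
    _ = |∑ q, ∑ k ∈ C q, c k * x k| := by rw [cluster_sum hC]
    _ ≤ ∑ q, |∑ k ∈ C q, c k * x k| := Finset.abs_sum_le_sum_abs _ _
    _ ≤ ∑ q, (∑ k ∈ C q, |c k|) / 2 * D := by
        apply Finset.sum_le_sum; intro q _
        exact zero_sum_bound (C q) c x (hzero q) hD fun k hk k' hk' => hx q k hk k' hk'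
    _ = (∑ k, |c k|) / 2 * D := by
        rw [cluster_sum hC (fun k => |c k|), Finset.sum_div, Finset.sum_mul]
    _ ≤ (1 - γ) * D := by
        apply mul_le_mul_of_nonneg_right _ hD
        linarith

/-- products preserve common influence -/
lemma CI_mul (hC : IsClustering C) {M N : Matrix (Fin n) (Fin n) ℝ}
    (hM : InterClusterCommonInfluence C M) (hN : InterClusterCommonInfluence C N) : InterClusterCommonInfluence C (M * N) := by
  classical
  intro p q i hi i' hi'
  -- common value of ∑_{k∈C q} N j k on cluster r
  set val : Fin K → ℝ := fun r =>
    if h : (C r).Nonempty then ∑ k ∈ C q, N h.choose k else 0 with hval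
  have hvalspec : ∀ r, ∀ j ∈ C r, ∑ k ∈ C q, N j k = val r := by
    intro r j hj
    have hne : (C r).Nonempty := ⟨j, hj⟩
    simp only [hval, dif_pos hne]
    exact hN r q j hj hne.choose hne.choose_spec
  have expand : ∀ i₀ : Fin n, ∑ k ∈ C q, (M * N) i₀ k = ∑ r, val r * ∑ j ∈ C r, M i₀ j := by
    intro i₀
    simp only [Matrix.mul_apply]
    rw [Finset.sum_comm]
    have h1 : ∀ j, ∑ k ∈ C q, M i₀ j * N j k = M i₀ j * ∑ k ∈ C q, N j k := by
      intro j; rw [Finset.mul_sum]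
    rw [Finset.sum_congr rfl fun j _ => h1 j,
      cluster_sum hC (fun j => M i₀ j * ∑ k ∈ C q, N j k)]
    apply Finset.sum_congr rfl
    intro r _
    rw [Finset.mul_sum]
    exact Finset.sum_congr rfl fun j hj => by rw [hvalspec r j hj]; ring
  rw [expand i, expand i']
  exact Finset.sum_congr rfl fun r _ => by rw [hM p r i hi i' hi']

end part3


lemma crossing {α : Type*} {r : α → α → Prop} {V : Set α} :
    ∀ {a b}, Relation.ReflTransGen r a b → a ∈ V → b ∉ V →
      ∃ u u', u ∈ V ∧ u' ∉ V ∧ r u u' := by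
  intro a b h
  induction h with
  | refl => intro ha hb; exact absurd ha hb
  | @tail c d h1 h2 ih =>
      intro ha hd
      by_cases hc : c ∈ V
      · exact ⟨c, d, hc, hd, h2⟩
      · exact ih ha hc

section root
variable {n K : ℕ} {C : Fin K → Finset (Fin n)} {A : ℕ → Matrix (Fin n) (Fin n) ℝ}
  {e : ℝ} {L : ℕ}

lemma window_root (hA : ∀ t, IsStochastic (A t)) (he : 0 < e)
    (hB1 : ∀ t i j, A t i j = 0 ∨ e ≤ A t i j) (hB2 : ∀ t i, e ≤ A t i i)
    (hL : 0 < L) (hspan : ∀ t, HasClusterSpanningTrees C (∑ s ∈ Finset.range L, A (t + s)))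
    (hn : 1 ≤ n) (t : ℕ) (p : Fin K) :
    ∃ v, ∀ i ∈ C p, e ^ (L * (n * n)) ≤ prodFrom A t (L * (n * n)) i v := by
  classical
  have he0 : (0:ℝ) ≤ e := le_of_lt he
  set W := n * n with hW
  -- roots of each window
  have hroots : ∀ w : ℕ, ∃ v, ∀ i ∈ C p, Reaches (∑ s ∈ Finset.range L, A (t + L * w + s)) v i :=
    fun w => hspan (t + L * w) p
  choose root hroot using hroots
  -- pigeonhole
  obtain ⟨v, hv⟩ : ∃ v : Fin n, n ≤ ((Finset.range W).filter (fun w => root w = v)).card := by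
    by_contra hcon
    push_neg at hcon
    have hcard : (Finset.range W).card
        = ∑ v : Fin n, ((Finset.range W).filter (fun w => root w = v)).card :=
      Finset.card_eq_sum_card_fiberwise fun w _ => Finset.mem_univ (root w)
    have hle : ∑ v : Fin n, ((Finset.range W).filter (fun w => root w = v)).card
        ≤ ∑ _v : Fin n, (n - 1) :=
      Finset.sum_le_sum fun v _ => Nat.le_sub_one_of_lt (hcon v)
    have h1 : W ≤ n * (n - 1) := by
      calc W = (Finset.range W).card := (Finset.card_range W).symm
        _ = ∑ v : Fin n, ((Finset.range W).filter (fun w => root w = v)).card := hcard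
        _ ≤ ∑ _v : Fin n, (n - 1) := hle
        _ = n * (n - 1) := by
            rw [Finset.sum_const, Finset.card_univ, Fintype.card_fin, smul_eq_mul]
    have h2 : n * (n - 1) < n * n :=
      mul_lt_mul_of_pos_left (show n - 1 < n by omega) (show 0 < n by omega)
    rw [hW] at h1
    omega
  set S := (Finset.range W).filter (fun w => root w = v) with hS
  refine ⟨v, ?_⟩
  -- the growing set
  set V : ℕ → Finset (Fin n) :=
    fun w => Finset.univ.filter (fun u => e ^ (L * w) ≤ prodFrom A t (L * w) u v) with hV
  have hmemV : ∀ w u, u ∈ V w ↔ e ^ (L * w) ≤ prodFrom A t (L * w) u v := by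
    intro w u; simp [hV]
  have hv0 : v ∈ V 0 := by
    rw [hmemV]
    simp [prodFrom, Matrix.one_apply]
  have hstep : ∀ w u u', u ∈ V w →
      e ^ L ≤ prodFrom A (t + L * w) L u' u → u' ∈ V (w + 1) := by
    intro w u u' hu hwin
    rw [hmemV] at hu ⊢
    have hcomp : prodFrom A t (L * (w + 1)) = prodFrom A (t + L * w) L * prodFrom A t (L * w) := by
      rw [show L * (w + 1) = L * w + L by ring, prodFrom_add]
    rw [hcomp]
    calc e ^ (L * (w + 1)) = e ^ L * e ^ (L * w) := by rw [← pow_add]; ring_nf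
      _ ≤ prodFrom A (t + L * w) L u' u * prodFrom A t (L * w) u v := by
          apply mul_le_mul hwin hu (by positivity)
          exact le_trans (by positivity) hwin
      _ ≤ _ := mul_entry_ge (prodFrom_nonneg hA _ _) (prodFrom_nonneg hA _ _) u' u v
  have hmono : ∀ w, V w ⊆ V (w + 1) := by
    intro w u hu
    apply hstep w u u hu
    exact prodFrom_diag hA he0 hB2 _ L u
  have hvin : ∀ w, v ∈ V w := by
    intro w; induction w with
    | zero => exact hv0
    | succ w ih => exact hmono w ih
  have hgrow : ∀ w, root w = v → ¬ (C p ⊆ V w) → ∃ u', u' ∉ V w ∧ u' ∈ V (w + 1) := by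
    intro w hwroot hnsub
    obtain ⟨i, hiC, hiV⟩ := Finset.not_subset.mp hnsub
    have hreach : Reaches (∑ s ∈ Finset.range L, A (t + L * w + s)) v i := by
      rw [← hwroot]; exact hroot w i hiC
    obtain ⟨u, u', huV, hu'V, hr⟩ :=
      crossing (V := fun z => z ∈ V w) hreach (hvin w) (by exact hiV)
    -- hr : 0 < (∑ s ∈ range L, A (t + L * w + s)) u' u
    have hedge : ∃ s < L, 0 < A (t + L * w + s) u' u := by
      by_contra hcon
      push_neg at hcon
      have : (∑ s ∈ Finset.range L, A (t + L * w + s)) u' u = 0 := by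
        have : ∀ s ∈ Finset.range L, A (t + L * w + s) u' u = 0 := by
          intro s hs
          exact le_antisymm (hcon s (Finset.mem_range.mp hs)) ((hA _).1 u' u)
        simp only [Matrix.sum_apply]
        exact Finset.sum_eq_zero this
      rw [this] at hr; exact lt_irrefl 0 hr
    obtain ⟨s, hsL, hspos⟩ := hedge
    have hsE : e ≤ A (t + L * w + s) u' u := by
      rcases hB1 (t + L * w + s) u' u with h | h
      · rw [h] at hspos; exact absurd hspos (lt_irrefl 0)
      · exact h
    have hwin : e ^ L ≤ prodFrom A (t + L * w) L u' u := by
      calc e ^ L = e ^ (L - 1) * e := by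
            rw [← pow_succ]; congr 1; omega
        _ ≤ e ^ (L - 1) * A (t + L * w + s) u' u :=
            mul_le_mul_of_nonneg_left hsE (by positivity)
        _ ≤ _ := prodFrom_edge hA he0 hB2 (t + L * w) L (t + L * w + s)
            (by omega) (by omega) u' u
    exact ⟨u', hu'V, hstep w u u' huV hwin⟩
  -- the induction
  have hinv : ∀ w, C p ⊆ V w ∨ (S.filter (· < w)).card + 1 ≤ (V w).card := by
    intro w
    induction w with
    | zero =>
        right
        have h0 : S.filter (· < 0) = ∅ :=
          Finset.filter_eq_empty_iff.mpr (fun x _ => by omega)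
        rw [h0, Finset.card_empty]
        exact Nat.one_le_iff_ne_zero.mpr (Finset.card_ne_zero_of_mem hv0)
    | succ w ih =>
        by_cases hsub : C p ⊆ V w
        · left; exact hsub.trans (hmono w)
        · right
          rcases ih with h | h
          · exact absurd h hsub
          by_cases hwS : w ∈ S
          · obtain ⟨u', hu'1, hu'2⟩ := hgrow w (Finset.mem_filter.mp hwS).2 hsub
            have hss : V w ⊂ V (w + 1) :=
              Finset.ssubset_iff_of_subset (hmono w) |>.mpr ⟨u', hu'2, hu'1⟩
            have hcard : (V w).card + 1 ≤ (V (w + 1)).card := Finset.card_lt_card hss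
            have hfil : (S.filter (· < w + 1)).card ≤ (S.filter (· < w)).card + 1 := by
              have : S.filter (· < w + 1) ⊆ insert w (S.filter (· < w)) := by
                intro u hu
                obtain ⟨huS, huw⟩ := Finset.mem_filter.mp hu
                rcases Nat.lt_succ_iff_lt_or_eq.mp huw with h' | h'
                · exact Finset.mem_insert_of_mem (Finset.mem_filter.mpr ⟨huS, h'⟩)
                · subst h'; exact Finset.mem_insert_self _ _
              calc (S.filter (· < w + 1)).card ≤ (insert w (S.filter (· < w))).card :=
                    Finset.card_le_card this
                _ ≤ (S.filter (· < w)).card + 1 := Finset.card_insert_le _ _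
            omega
          · have hfil : S.filter (· < w + 1) = S.filter (· < w) := by
              apply Finset.filter_congr
              intro u huS
              constructor
              · intro h'
                rcases Nat.lt_succ_iff_lt_or_eq.mp h' with h'' | h''
                · exact h''
                · subst h''; exact absurd huS hwS
              · omega
            have := Finset.card_le_card (hmono w)
            rw [hfil]
            omega
  rcases hinv W with h | h
  · intro i hi
    have := h hi
    rw [hmemV] at this
    exact this
  · exfalso
    have hfil : S.filter (· < W) = S := by
      apply Finset.filter_true_of_mem
      intro u huS
      exact Finset.mem_range.mp (Finset.mem_filter.mp huS).1
    rw [hfil] at h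
    have hle : (V W).card ≤ n := by
      calc (V W).card ≤ (Finset.univ : Finset (Fin n)).card := Finset.card_le_univ _
        _ = n := by simp
    omega

end root


section lemM
variable {n K : ℕ} {C : Fin K → Finset (Fin n)} {A : ℕ → Matrix (Fin n) (Fin n) ℝ}
  {e : ℝ} {L : ℕ}

lemma CI_one (hC : IsClustering C) : InterClusterCommonInfluence C (1 : Matrix (Fin n) (Fin n) ℝ) := by
  classical
  intro p q i hi i' hi'
  have key : ∀ k : Fin n, k ∈ C p → (∑ j ∈ C q, (1 : Matrix (Fin n) (Fin n) ℝ) k j)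
      = if p = q then 1 else 0 := by
    intro k hk
    by_cases hpq : p = q
    · subst hpq
      rw [if_pos rfl, Finset.sum_eq_single k]
      · simp [Matrix.one_apply]
      · intro b _ hb; simp [Matrix.one_apply, (Ne.symm hb)]
      · intro hnk; exact absurd hk hnk
    · rw [if_neg hpq]
      apply Finset.sum_eq_zero
      intro j hj
      have : k ≠ j := by
        rintro rfl
        exact (Finset.disjoint_left.mp (hC.1 p q hpq) hk) hj
      simp [Matrix.one_apply, this]
  rw [key i hi, key i' hi']

lemma CI_prodFrom (hC : IsClustering C) (hCI : ∀ t, InterClusterCommonInfluence C (A t)) (a m : ℕ) :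
    InterClusterCommonInfluence C (prodFrom A a m) := by
  induction m with
  | zero => exact CI_one hC
  | succ m ih => exact CI_mul hC (hCI _) ih

lemma lemM (hC : IsClustering C) (hA : ∀ t, IsStochastic (A t))
    (he : 0 < e) (he2 : e ≤ 1/2)
    (hB1 : ∀ t i j, A t i j = 0 ∨ e ≤ A t i j) (hB2 : ∀ t i, e ≤ A t i i)
    (hCI : ∀ t, InterClusterCommonInfluence C (A t)) (hL : 0 < L)
    (hspan : ∀ t, HasClusterSpanningTrees C (∑ s ∈ Finset.range L, A (t + s))) (hn : 1 ≤ n)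
    (x : Fin n → ℝ) {D : ℝ} (hD : 0 ≤ D)
    (hx : ∀ p, ∀ i ∈ C p, ∀ j ∈ C p, |x i - x j| ≤ D) :
    ∀ t p i j, i ∈ C p → j ∈ C p →
      |(prodFrom A 0 t).mulVec x i - (prodFrom A 0 t).mulVec x j|
        ≤ (1 - e ^ (L * (n * n))) ^ (t / (L * (n * n))) * D := by
  set m := L * (n * n) with hm
  have hm1 : 1 ≤ m := by
    have : 1 ≤ n * n := Nat.one_le_iff_ne_zero.mpr (by positivity)
    calc 1 = 1 * 1 := rfl
      _ ≤ L * (n * n) := Nat.mul_le_mul hL this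
  set γ := e ^ m with hγdef
  have hγpos : 0 < γ := by positivity
  have hγle : γ ≤ 1/2 := by
    calc γ = e ^ m := rfl
      _ ≤ e ^ 1 := pow_le_pow_of_le_one (le_of_lt he) (by linarith) hm1
      _ = e := pow_one e
      _ ≤ 1/2 := he2
  have h1γ : 0 ≤ 1 - γ := by linarith
  have h1γlt : 1 - γ < 1 := by linarith
  -- oscillation after r full blocks
  have block : ∀ r p i j, i ∈ C p → j ∈ C p →
      |(prodFrom A 0 (m * r)).mulVec x i - (prodFrom A 0 (m * r)).mulVec x j|
        ≤ (1 - γ) ^ r * D := by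
    intro r
    induction r with
    | zero => intro p i j hi hj; simpa [prodFrom, Matrix.one_mulVec] using hx p i hi j hj
    | succ r ih =>
        intro p i j hi hj
        have hsplit : prodFrom A 0 (m * (r + 1))
            = prodFrom A (m * r) m * prodFrom A 0 (m * r) := by
          rw [show m * (r + 1) = m * r + m by ring, prodFrom_add]
          norm_num
        obtain ⟨v, hv⟩ := window_root hA he hB1 hB2 hL hspan hn (m * r) p
        rw [hsplit, ← Matrix.mulVec_mulVec]
        calc |(prodFrom A (m * r) m).mulVec ((prodFrom A 0 (m * r)).mulVec x) i
              - (prodFrom A (m * r) m).mulVec ((prodFrom A 0 (m * r)).mulVec x) j|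
            ≤ (1 - γ) * ((1 - γ) ^ r * D) := by
              apply contraction_step hC (prodFrom_stoch hA _ _)
                (CI_prodFrom hC hCI _ _) hi hj (le_of_lt hγpos)
                (hv i hi) (hv j hj) (by positivity)
              intro q k hk k' hk'
              exact ih q k k' hk hk'
          _ = (1 - γ) ^ (r + 1) * D := by ring
  -- general time
  intro t p i j hi hj
  have htdecomp : m * (t / m) + t % m = t := Nat.div_add_mod t m
  have key : |(prodFrom A 0 (m * (t / m) + t % m)).mulVec x i
      - (prodFrom A 0 (m * (t / m) + t % m)).mulVec x j|
      ≤ (1 - γ) ^ (t / m) * D := by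
    rw [prodFrom_add, ← Matrix.mulVec_mulVec]
    have hstep := contraction_step hC (prodFrom_stoch hA (0 + m * (t / m)) (t % m))
      (CI_prodFrom hC hCI (0 + m * (t / m)) (t % m)) hi hj (le_refl 0)
      ((prodFrom_stoch hA (0 + m * (t / m)) (t % m)).1 i i)
      ((prodFrom_stoch hA (0 + m * (t / m)) (t % m)).1 j i)
      (show (0:ℝ) ≤ (1 - γ) ^ (t / m) * D by positivity)
      (fun q k hk k' hk' => block (t / m) q k k' hk hk')
    calc _ ≤ (1 - (0:ℝ)) * ((1 - γ) ^ (t / m) * D) := hstep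
      _ = (1 - γ) ^ (t / m) * D := by ring
  rw [htdecomp] at key
  exact key

end lemM


noncomputable section classStruct
variable {K : ℕ} (B : Matrix (Fin K) (Fin K) ℝ)

/-- recurrent state -/
def Rec (i : Fin K) : Prop := ∀ j, Reaches B j i → Reaches B i j

/-- communication class -/
def cls (i : Fin K) : Finset (Fin K) :=
  Finset.univ.filter (fun j => Reaches B i j ∧ Reaches B j i)

variable {B}

lemma mem_cls_self (i : Fin K) : i ∈ cls B i := by
  unfold cls
  simp only [Finset.mem_filter, Finset.mem_univ, true_and]
  exact ⟨Relation.ReflTransGen.refl, Relation.ReflTransGen.refl⟩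

lemma mem_cls_iff {i j : Fin K} : j ∈ cls B i ↔ Reaches B i j ∧ Reaches B j i := by
  simp [cls]

lemma Rec_of_mem_cls {i j : Fin K} (hi : Rec B i) (hj : j ∈ cls B i) : Rec B j := by
  obtain ⟨hij, hji⟩ := mem_cls_iff.mp hj
  intro k hk
  exact Relation.ReflTransGen.trans hji (hi k (Relation.ReflTransGen.trans hk hji))

lemma cls_eq_of_mem {i j : Fin K} (hj : j ∈ cls B i) : cls B j = cls B i := by
  obtain ⟨hij, hji⟩ := mem_cls_iff.mp hj
  ext k
  rw [mem_cls_iff, mem_cls_iff]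
  constructor
  · rintro ⟨h1, h2⟩; exact ⟨hij.trans h1, h2.trans hji⟩
  · rintro ⟨h1, h2⟩; exact ⟨hji.trans h1, h2.trans hij⟩

lemma entry_mem_cls {i j : Fin K} (hi : Rec B i) (hpos : 0 < B i j) : j ∈ cls B i := by
  have hji : Reaches B j i := Relation.ReflTransGen.single hpos
  exact mem_cls_iff.mpr ⟨hi j hji, hji⟩

lemma row_zero_outside {i j : Fin K} (hB : IsStochastic B) (hi : Rec B i)
    (hj : j ∉ cls B i) : B i j = 0 := by
  by_contra h
  exact hj (entry_mem_cls hi (lt_of_le_of_ne (hB.1 i j) (Ne.symm h)))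

lemma row_sum_cls {i : Fin K} (hB : IsStochastic B) (hi : Rec B i) :
    ∑ j ∈ cls B i, B i j = 1 := by
  rw [← hB.2 i]
  apply Finset.sum_subset (Finset.subset_univ _)
  intro j _ hj
  exact row_zero_outside hB hi hj

/-- every state has a recurrent ancestor -/
lemma exists_rec_ancestor (hB : IsStochastic B) (i : Fin K) :
    ∃ r, Rec B r ∧ Reaches B r i := by
  classical
  set Anc : Fin K → Finset (Fin K) := fun i => Finset.univ.filter (fun j => Reaches B j i)
    with hAnc
  have key : ∀ N i, (Anc i).card ≤ N → ∃ r, Rec B r ∧ Reaches B r i := by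
    intro N
    induction N with
    | zero =>
        intro i hi
        exfalso
        have : i ∈ Anc i := by
          simp only [hAnc, Finset.mem_filter, Finset.mem_univ, true_and]
          exact Relation.ReflTransGen.refl
        have := Finset.card_pos.mpr ⟨i, this⟩
        omega
    | succ N ih =>
        intro i hi
        by_cases hrec : Rec B i
        · exact ⟨i, hrec, Relation.ReflTransGen.refl⟩
        · simp only [Rec, not_forall] at hrec
          obtain ⟨j, hji, hnij⟩ := hrec
          have hsub : Anc j ⊆ Anc i := by
            intro k hk
            simp only [hAnc, Finset.mem_filter, Finset.mem_univ, true_and] at hk ⊢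
            exact hk.trans hji
          have hissub : Anc j ⊂ Anc i := by
            apply Finset.ssubset_iff_of_subset hsub |>.mpr
            refine ⟨i, by
              simp only [hAnc, Finset.mem_filter, Finset.mem_univ, true_and]
              exact Relation.ReflTransGen.refl, ?_⟩
            simp only [hAnc, Finset.mem_filter, Finset.mem_univ, true_and]
            exact hnij
          have hcard : (Anc j).card ≤ N := by
            have := Finset.card_lt_card hissub
            omega
          obtain ⟨r, hr, hrj⟩ := ih j hcard
          exact ⟨r, hr, hrj.trans hji⟩
  exact key (Anc i).card i (le_refl _)

/-- class representative -/
def rep (B : Matrix (Fin K) (Fin K) ℝ) (i : Fin K) : Fin K :=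
  (cls B i).min' ⟨i, mem_cls_self i⟩

lemma rep_mem (i : Fin K) : rep B i ∈ cls B i := Finset.min'_mem _ _

lemma rep_eq_of_mem {i j : Fin K} (hj : j ∈ cls B i) : rep B j = rep B i := by
  unfold rep
  congr 1
  exact cls_eq_of_mem hj

/-- the clustering by recurrence classes and transient singletons -/
def Dcl (B : Matrix (Fin K) (Fin K) ℝ) : Fin K → Finset (Fin K) := fun q =>
  if Rec B q then (if q = rep B q then cls B q else ∅) else {q}

lemma Dcl_clustering : IsClustering (Dcl B) := by
  constructor
  · intro p q hpq
    rw [Finset.disjoint_left]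
    intro x hxp hxq
    unfold Dcl at hxp hxq
    have hclsmem : ∀ r : Fin K, x ∈ (if Rec B r then (if r = rep B r then cls B r else ∅)
        else {r}) → (Rec B r ∧ r = rep B r ∧ x ∈ cls B r) ∨ (¬ Rec B r ∧ x = r) := by
      intro r hx
      by_cases hr : Rec B r
      · rw [if_pos hr] at hx
        by_cases hr2 : r = rep B r
        · rw [if_pos hr2] at hx; exact Or.inl ⟨hr, hr2, hx⟩
        · rw [if_neg hr2] at hx; exact absurd hx (Finset.notMem_empty x)
      · rw [if_neg hr, Finset.mem_singleton] at hx; exact Or.inr ⟨hr, hx⟩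
    rcases hclsmem p hxp with ⟨hp, hp2, hxp'⟩ | ⟨hp, hxp'⟩ <;>
      rcases hclsmem q hxq with ⟨hq, hq2, hxq'⟩ | ⟨hq, hxq'⟩
    · apply hpq
      calc p = rep B p := hp2
        _ = rep B x := (rep_eq_of_mem hxp').symm
        _ = rep B q := rep_eq_of_mem hxq'
        _ = q := hq2.symm
    · subst hxq'
      exact hq (Rec_of_mem_cls hp hxp')
    · subst hxp'
      exact hp (Rec_of_mem_cls hq hxq')
    · exact hpq (hxp' ▸ hxq' ▸ rfl)
  · intro i
    by_cases hrec : Rec B i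
    · refine ⟨rep B i, ?_⟩
      unfold Dcl
      have hrr : Rec B (rep B i) := Rec_of_mem_cls hrec (rep_mem i)
      have hclseq : cls B (rep B i) = cls B i := cls_eq_of_mem (rep_mem i)
      have hreprep : rep B (rep B i) = rep B i := rep_eq_of_mem (rep_mem i)
      rw [if_pos hrr, if_pos hreprep.symm, hclseq]
      exact mem_cls_self i
    · exact ⟨i, by simp [Dcl, hrec]⟩

lemma mem_Dcl_rec {i : Fin K} (hi : Rec B i) : i ∈ Dcl B (rep B i) ∧
    Dcl B (rep B i) = cls B i := by
  have hrr : Rec B (rep B i) := Rec_of_mem_cls hi (rep_mem i)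
  have hclseq : cls B (rep B i) = cls B i := cls_eq_of_mem (rep_mem i)
  have hreprep : rep B (rep B i) = rep B i := rep_eq_of_mem (rep_mem i)
  unfold Dcl
  rw [if_pos hrr, if_pos hreprep.symm, hclseq]
  exact ⟨mem_cls_self i, rfl⟩

/-- common influence of B w.r.t. the recurrence clustering -/
lemma Dcl_CI (hB : IsStochastic B) : InterClusterCommonInfluence (Dcl B) B := by
  intro p q i hi i' hi'
  unfold Dcl at hi hi'
  by_cases hp : Rec B p
  · rw [if_pos hp] at hi hi'
    by_cases hp2 : p = rep B p
    swap
    · rw [if_neg hp2] at hi; exact absurd hi (Finset.notMem_empty i)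
    rw [if_pos hp2] at hi hi'
    -- i, i' ∈ cls B p, both recurrent
    have hreci : Rec B i := Rec_of_mem_cls hp hi
    have hreci' : Rec B i' := Rec_of_mem_cls hp hi'
    have hclsi : cls B i = cls B p := cls_eq_of_mem hi
    have hclsi' : cls B i' = cls B p := cls_eq_of_mem hi'
    have key : ∀ k : Fin K, k ∈ cls B p → Rec B k → cls B k = cls B p →
        ∑ j ∈ Dcl B q, B k j = (if Dcl B q = cls B p then 1 else 0) := by
      intro k hk hreck hclsk
      by_cases heq : Dcl B q = cls B p
      · rw [if_pos heq, heq, ← hclsk]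
        exact row_sum_cls hB hreck
      · rw [if_neg heq]
        apply Finset.sum_eq_zero
        intro j hj
        by_contra hne
        have hpos : 0 < B k j := lt_of_le_of_ne (hB.1 k j) (Ne.symm hne)
        have hjk : j ∈ cls B k := entry_mem_cls hreck hpos
        rw [hclsk] at hjk
        -- j ∈ cls B p and j ∈ Dcl B q; show Dcl B q = cls B p
        apply heq
        unfold Dcl at hj ⊢
        by_cases hq : Rec B q
        · rw [if_pos hq] at hj ⊢
          by_cases hq2 : q = rep B q
          · rw [if_pos hq2] at hj ⊢
            calc cls B q = cls B j := (cls_eq_of_mem hj).symm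
              _ = cls B p := cls_eq_of_mem hjk
          · rw [if_neg hq2] at hj; exact absurd hj (Finset.notMem_empty j)
        · rw [if_neg hq] at hj ⊢
          rw [Finset.mem_singleton] at hj
          subst hj
          exact absurd (Rec_of_mem_cls hp hjk) hq
    rw [key i hi hreci hclsi, key i' hi' hreci' hclsi']
  · rw [if_neg hp, Finset.mem_singleton] at hi hi'
    rw [hi, hi']

lemma Dcl_HasClusterSpanningTrees : HasClusterSpanningTrees (Dcl B) B := by
  intro p
  refine ⟨p, ?_⟩
  intro i hi
  unfold Dcl at hi
  by_cases hp : Rec B p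
  · rw [if_pos hp] at hi
    by_cases hp2 : p = rep B p
    · rw [if_pos hp2] at hi
      exact (mem_cls_iff.mp hi).1
    · rw [if_neg hp2] at hi; exact absurd hi (Finset.notMem_empty i)
  · rw [if_neg hp, Finset.mem_singleton] at hi
    subst hi
    exact Relation.ReflTransGen.refl

end classStruct

/-! ### axioms for previously-proved lemmas -/

/-! ### lemma N : convergence of powers -/

section lemN
variable {K : ℕ} {B : Matrix (Fin K) (Fin K) ℝ}

lemma stoch_pow (hB : IsStochastic B) (t : ℕ) : IsStochastic (B ^ t) := by
  induction t with
  | zero => simpa using stoch_one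
  | succ t ih => rw [pow_succ]; exact stoch_mul ih hB

lemma prodFrom_const (t : ℕ) : prodFrom (fun _ => B) 0 t = B ^ t := by
  induction t with
  | zero => rfl
  | succ t ih =>
      show B * prodFrom (fun _ => B) 0 t = B ^ (t + 1)
      rw [ih, ← pow_succ']

lemma pow_entry_persist (hB : IsStochastic B) {e : ℝ} (he : 0 < e)
    (hB2 : ∀ i, e ≤ B i i) {i j : Fin K} {ℓ : ℕ} (h : 0 < (B ^ ℓ) i j) :
    ∀ t, ℓ ≤ t → 0 < (B ^ t) i j := by
  intro t ht
  induction t with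
  | zero => rwa [Nat.le_zero.mp ht] at h
  | succ t ih =>
      rcases Nat.lt_or_ge ℓ (t + 1) with h' | h'
      · have hpos : 0 < (B ^ t) i j := ih (by omega)
        have : B i i * (B ^ t) i j ≤ (B ^ (t+1)) i j := by
          rw [pow_succ']
          exact mul_entry_ge hB.1 (stoch_pow hB t).1 i i j
        have : 0 < B i i * (B ^ t) i j := mul_pos (lt_of_lt_of_le he (hB2 i)) hpos
        linarith
      · have : ℓ = t + 1 := by omega
        rwa [this] at h

lemma reaches_pow_pos (hB : IsStochastic B) {r i : Fin K} (h : Reaches B r i) :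
    ∃ ℓ, 0 < (B ^ ℓ) i r := by
  induction h with
  | refl => exact ⟨0, by simp [Matrix.one_apply]⟩
  | @tail c d hrc hcd ih =>
      obtain ⟨ℓ, hℓ⟩ := ih
      refine ⟨ℓ + 1, ?_⟩
      have h1 : B d c * (B ^ ℓ) c r ≤ (B ^ (ℓ+1)) d r := by
        rw [pow_succ']
        exact mul_entry_ge hB.1 (stoch_pow hB ℓ).1 d c r
      have h2 : 0 < B d c * (B ^ ℓ) c r := mul_pos hcd hℓ
      linarith

lemma entry_le_one (hB : IsStochastic B) (i j : Fin K) : B i j ≤ 1 := by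
  rw [← hB.2 i]
  exact Finset.single_le_sum (f := fun k => B i k) (fun k _ => hB.1 i k) (Finset.mem_univ j)

/-- Main single-matrix convergence -/
lemma lemN (hB : IsStochastic B) {e : ℝ} (he : 0 < e) (he2 : e ≤ 1/2)
    (hB1 : ∀ i j, B i j = 0 ∨ e ≤ B i j) (hB2 : ∀ i, e ≤ B i i) (c : Fin K → ℝ) :
    ∃ l, Tendsto (fun t => (B ^ t).mulVec c) atTop (𝓝 l) := by
  classical
  rcases Nat.eq_zero_or_pos K with hK | hK
  · subst hK
    refine ⟨0, ?_⟩
    have : (fun t => (B ^ t).mulVec c) = fun _ => 0 := by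
      funext t i; exact absurd i.2 (by omega)
    rw [this]; exact tendsto_const_nhds
  set x : ℕ → Fin K → ℝ := fun t => (B ^ t).mulVec c with hx
  obtain ⟨Mc, hMc⟩ : ∃ M, ∀ i, |c i| ≤ M :=
    ⟨∑ i, |c i|, fun i => Finset.single_le_sum (fun j _ => abs_nonneg (c j)) (Finset.mem_univ i)⟩
  have hxbd : ∀ t i, |x t i| ≤ Mc := fun t i => stoch_mulVec_bound (stoch_pow hB t) hMc i
  have hMc0 : 0 ≤ Mc := le_trans (abs_nonneg _) (hMc ⟨0, hK⟩)
  -- oscillation decay within classes, from lemM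
  set m := 1 * (K * K) with hm
  set γ := e ^ m with hγ
  have hγpos : 0 < γ := by positivity
  have hγ1 : γ < 1 := by
    calc γ ≤ e ^ 1 := by
          apply pow_le_pow_of_le_one (le_of_lt he) (by linarith)
          have : 1 ≤ K * K := Nat.one_le_iff_ne_zero.mpr (by positivity)
          omega
      _ = e := pow_one e
      _ < 1 := by linarith
  have osc : ∀ t p i j, i ∈ Dcl B p → j ∈ Dcl B p →
      |x t i - x t j| ≤ (1 - γ) ^ (t / m) * (2 * Mc) := by
    intro t p i j hi hj
    have := lemM (A := fun _ => B) (L := 1) Dcl_clustering (fun _ => hB) he he2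
      (fun _ => hB1) (fun _ => hB2) (fun _ => Dcl_CI hB) Nat.one_pos
      (fun t => by
        have : (∑ s ∈ Finset.range 1, B) = B := by simp
        simpa [this] using Dcl_HasClusterSpanningTrees)
      hK c (D := 2 * Mc) (by linarith)
      (fun p i hi j hj => by
        calc |c i - c j| ≤ |c i| + |c j| := abs_sub _ _
          _ ≤ 2 * Mc := by have := hMc i; have := hMc j; linarith)
      t p i j hi hj
    rwa [prodFrom_const] at this
  have hm1 : 0 < m := by
    rw [hm]; exact Nat.mul_pos Nat.one_pos (Nat.mul_pos hK hK)
  set g : ℕ → ℝ := fun t => (1 - γ) ^ (t / m) * (2 * Mc) with hg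
  have hgnonneg : ∀ t, 0 ≤ g t := fun t => by
    apply mul_nonneg (pow_nonneg (by linarith) _) (by linarith)
  have hgt0 : Tendsto g atTop (𝓝 0) := by
    have hdiv : Tendsto (fun t : ℕ => t / m) atTop atTop := by
      apply Filter.tendsto_atTop_atTop.mpr
      intro b
      exact ⟨b * m, fun a ha => (Nat.le_div_iff_mul_le hm1).mpr ha⟩
    have h1 := (tendsto_pow_atTop_nhds_zero_of_lt_one
      (by linarith : (0:ℝ) ≤ 1 - γ) (by linarith : (1:ℝ) - γ < 1)).comp hdiv
    have := h1.mul_const (2 * Mc)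
    simpa [hg] using this
  have hxstep : ∀ t j, x (t+1) j = B.mulVec (x t) j := by
    intro t j
    show (B ^ (t+1)).mulVec c j = _
    rw [pow_succ', ← Matrix.mulVec_mulVec]
  -- convergence of recurrent coordinates
  have hrecconv : ∀ i, Rec B i → ∃ li, Tendsto (fun t => x t i) atTop (𝓝 li) := by
    intro i hreci
    have hFne : (cls B i).Nonempty := ⟨i, mem_cls_self i⟩
    set F := cls B i with hF
    set Mx : ℕ → ℝ := fun t => F.sup' hFne (fun j => x t j) with hMx
    set mn : ℕ → ℝ := fun t => F.inf' hFne (fun j => x t j) with hmn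
    have hrow : ∀ j, j ∈ F → ∀ t, x (t+1) j = ∑ k ∈ F, B j k * x t k := by
      intro j hj t
      rw [hxstep]
      have hrecj : Rec B j := Rec_of_mem_cls hreci hj
      have hclsj : cls B j = F := cls_eq_of_mem hj
      show ∑ k, B j k * x t k = _
      symm
      apply Finset.sum_subset (Finset.subset_univ F)
      intro k _ hk
      rw [row_zero_outside hB hrecj (by rwa [hclsj]), zero_mul]
    have hrowsum : ∀ j, j ∈ F → ∑ k ∈ F, B j k = 1 := by
      intro j hj
      have hrecj : Rec B j := Rec_of_mem_cls hreci hj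
      have hclsj : cls B j = F := cls_eq_of_mem hj
      rw [← hclsj]
      exact row_sum_cls hB hrecj
    have hMxanti : ∀ t, Mx (t+1) ≤ Mx t := by
      intro t
      apply Finset.sup'_le
      intro j hj
      rw [hrow j hj t]
      calc ∑ k ∈ F, B j k * x t k ≤ ∑ k ∈ F, B j k * Mx t := by
            apply Finset.sum_le_sum
            intro k hk
            exact mul_le_mul_of_nonneg_left (Finset.le_sup' _ hk) (hB.1 j k)
        _ = Mx t := by rw [← Finset.sum_mul, hrowsum j hj, one_mul]
    have hmnmono : ∀ t, mn t ≤ mn (t+1) := by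
      intro t
      apply Finset.le_inf'
      intro j hj
      rw [hrow j hj t]
      calc mn t = ∑ k ∈ F, B j k * mn t := by rw [← Finset.sum_mul, hrowsum j hj, one_mul]
        _ ≤ ∑ k ∈ F, B j k * x t k := by
            apply Finset.sum_le_sum
            intro k hk
            exact mul_le_mul_of_nonneg_left (Finset.inf'_le _ hk) (hB.1 j k)
    have hMxlb : ∀ t, -Mc ≤ Mx t := by
      intro t
      calc -Mc ≤ x t i := neg_le_of_abs_le (hxbd t i)
        _ ≤ Mx t := Finset.le_sup' _ (hF ▸ mem_cls_self i)
    have hmnub : ∀ t, mn t ≤ Mc := by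
      intro t
      calc mn t ≤ x t i := Finset.inf'_le _ (hF ▸ mem_cls_self i)
        _ ≤ Mc := le_of_abs_le (hxbd t i)
    have hMxconv : Tendsto Mx atTop (𝓝 (⨅ t, Mx t)) := by
      apply tendsto_atTop_ciInf (antitone_nat_of_succ_le hMxanti)
      refine ⟨-Mc, ?_⟩
      rintro y ⟨t, rfl⟩
      exact hMxlb t
    have hmnconv : Tendsto mn atTop (𝓝 (⨆ t, mn t)) := by
      apply tendsto_atTop_ciSup (monotone_nat_of_le_succ hmnmono)
      refine ⟨Mc, ?_⟩
      rintro y ⟨t, rfl⟩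
      exact hmnub t
    have hgap : ∀ t, Mx t - mn t ≤ g t := by
      intro t
      obtain ⟨j, hjF, hjeq⟩ := Finset.exists_mem_eq_sup' hFne (fun j => x t j)
      obtain ⟨k, hkF, hkeq⟩ := Finset.exists_mem_eq_inf' hFne (fun j => x t j)
      obtain ⟨hmem, hDeq⟩ := mem_Dcl_rec hreci
      have hjD : j ∈ Dcl B (rep B i) := by rw [hDeq, ← hF]; exact hjF
      have hkD : k ∈ Dcl B (rep B i) := by rw [hDeq, ← hF]; exact hkF
      calc Mx t - mn t = x t j - x t k := by
            simp only [hMx, hmn]; rw [hjeq, hkeq]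
        _ ≤ |x t j - x t k| := le_abs_self _
        _ ≤ g t := osc t (rep B i) j k hjD hkD
    have hgap0 : ∀ t, 0 ≤ Mx t - mn t := by
      intro t
      have h1 : mn t ≤ x t i := Finset.inf'_le _ (hF ▸ mem_cls_self i)
      have h2 : x t i ≤ Mx t := Finset.le_sup' _ (hF ▸ mem_cls_self i)
      linarith
    have hlimeq : (⨅ t, Mx t) = (⨆ t, mn t) := by
      have hsub : Tendsto (fun t => Mx t - mn t) atTop (𝓝 ((⨅ t, Mx t) - (⨆ t, mn t))) :=
        hMxconv.sub hmnconv
      have h1 : (⨅ t, Mx t) - (⨆ t, mn t) ≤ 0 :=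
        le_of_tendsto_of_tendsto' hsub hgt0 hgap
      have h2 : (0:ℝ) ≤ (⨅ t, Mx t) - (⨆ t, mn t) :=
        le_of_tendsto_of_tendsto' tendsto_const_nhds hsub hgap0
      linarith
    refine ⟨⨅ t, Mx t, ?_⟩
    apply tendsto_of_tendsto_of_tendsto_of_le_of_le (g := mn) (h := Mx) ?_ hMxconv
    · intro t; exact Finset.inf'_le _ (hF ▸ mem_cls_self i)
    · intro t; exact Finset.le_sup' _ (hF ▸ mem_cls_self i)
    · rw [hlimeq]; exact hmnconv
  -- choose limits for recurrent coordinates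
  have hrc : ∀ j : Fin K, ∃ lj, Rec B j → Tendsto (fun t => x t j) atTop (𝓝 lj) := by
    intro j
    by_cases h : Rec B j
    · obtain ⟨lj, hlj⟩ := hrecconv j h; exact ⟨lj, fun _ => hlj⟩
    · exact ⟨0, fun h' => absurd h' h⟩
  choose lrec hlrec using hrc
  set T : Finset (Fin K) := Finset.univ.filter (fun i => ¬ Rec B i) with hT
  by_cases hTcase : T = ∅
  · refine ⟨lrec, ?_⟩
    rw [tendsto_pi_nhds]
    intro j
    have hrj : Rec B j := by
      by_contra h
      have : j ∈ T := by simp [hT, h]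
      rw [hTcase] at this; exact absurd this (Finset.notMem_empty j)
    exact hlrec j hrj
  have hTne : T.Nonempty := Finset.nonempty_of_ne_empty hTcase
  have hanc : ∀ i : Fin K, ∃ r, Rec B r ∧ Reaches B r i := exists_rec_ancestor hB
  choose rfun hrfun1 hrfun2 using hanc
  have hpow : ∀ i, ∃ ℓ, 0 < (B ^ ℓ) i (rfun i) := fun i => reaches_pow_pos hB (hrfun2 i)
  set KK := Finset.univ.sup (fun i : Fin K => Nat.find (hpow i)) with hKK
  have hKKpos : ∀ i, 0 < (B ^ KK) i (rfun i) := by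
    intro i
    apply pow_entry_persist hB he hB2 (Nat.find_spec (hpow i))
    exact Finset.le_sup (f := fun i => Nat.find (hpow i)) (Finset.mem_univ i)
  have hKne : (Finset.univ : Finset (Fin K)).Nonempty := ⟨⟨0, hK⟩, Finset.mem_univ _⟩
  set κ := Finset.univ.inf' hKne (fun i : Fin K => (B ^ KK) i (rfun i)) with hκ
  have hκpos : 0 < κ := by
    rw [hκ, Finset.lt_inf'_iff]
    intro i _; exact hKKpos i
  have hκle1 : κ ≤ 1 := by
    calc κ ≤ (B ^ KK) ⟨0,hK⟩ (rfun ⟨0,hK⟩) := Finset.inf'_le _ (Finset.mem_univ _)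
      _ ≤ 1 := entry_le_one (stoch_pow hB KK) _ _
  have htransdecay : ∀ i, ∑ j ∈ T, (B ^ KK) i j ≤ 1 - κ := by
    intro i
    have hri : rfun i ∉ T := by simp [hT, hrfun1 i]
    have h1 : ∑ j ∈ insert (rfun i) T, (B ^ KK) i j ≤ ∑ j, (B ^ KK) i j :=
      Finset.sum_le_sum_of_subset_of_nonneg (Finset.subset_univ _)
        (fun j _ _ => (stoch_pow hB KK).1 i j)
    rw [Finset.sum_insert hri, (stoch_pow hB KK).2 i] at h1
    have h2 : κ ≤ (B ^ KK) i (rfun i) := Finset.inf'_le _ (Finset.mem_univ i)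
    linarith
  -- transient coordinates are Cauchy
  have htrans : ∀ i ∈ T, ∃ li, Tendsto (fun t => x t i) atTop (𝓝 li) := by
    intro i hiT
    have hcauchy : CauchySeq (fun t => x t i) := by
      rw [Metric.cauchySeq_iff]
      intro ε' hε'
      set ε := ε' * κ / (2 * (κ + 1)) with hε
      have hεpos : 0 < ε := by
        apply div_pos (mul_pos hε' hκpos)
        nlinarith
      -- uniform closeness for recurrent coordinates
      have hN0 : ∀ j : Fin K, ∃ Nj, Rec B j → ∀ u, Nj ≤ u → |x u j - lrec j| ≤ ε / 2 := by
        intro j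
        by_cases hrj : Rec B j
        · obtain ⟨Nj, hNj⟩ := Metric.tendsto_atTop.mp (hlrec j hrj) (ε/2) (by positivity)
          exact ⟨Nj, fun _ u hu => le_of_lt (by simpa [Real.dist_eq] using hNj u hu)⟩
        · exact ⟨0, fun h' => absurd h' hrj⟩
      choose N0f hN0f using hN0
      set N₀ := Finset.univ.sup N0f with hN₀
      have hreceps : ∀ j, Rec B j → ∀ u u', N₀ ≤ u → N₀ ≤ u' → |x u j - x u' j| ≤ ε := by
        intro j hrj u u' hu hu'
        have h1 := hN0f j hrj u (le_trans (Finset.le_sup (Finset.mem_univ j)) hu)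
        have h2 := hN0f j hrj u' (le_trans (Finset.le_sup (Finset.mem_univ j)) hu')
        calc |x u j - x u' j| = |(x u j - lrec j) - (x u' j - lrec j)| := by ring_nf
          _ ≤ |x u j - lrec j| + |x u' j - lrec j| := abs_sub _ _
          _ ≤ ε := by linarith
      set Ds : ℕ → ℕ → ℕ → ℝ :=
        fun t t' s => T.sup' hTne (fun i' => |x (t+s) i' - x (t'+s) i'|) with hDs
      have hDsle : ∀ t t' s j, j ∈ T → |x (t+s) j - x (t'+s) j| ≤ Ds t t' s := by
        intro t t' s j hj
        simp only [hDs]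
        exact Finset.le_sup' (fun i' => |x (t+s) i' - x (t'+s) i'|) hj
      have hDsnn : ∀ t t' s, 0 ≤ Ds t t' s := by
        intro t t' s
        obtain ⟨i₀, hi₀⟩ := hTne
        exact le_trans (abs_nonneg _) (hDsle t t' s i₀ hi₀)
      have hDsbd : ∀ t t' s, Ds t t' s ≤ 2 * Mc := by
        intro t t' s
        apply Finset.sup'_le
        intro i' _
        calc |x (t+s) i' - x (t'+s) i'| ≤ |x (t+s) i'| + |x (t'+s) i'| := abs_sub _ _
          _ ≤ 2 * Mc := by have := hxbd (t+s) i'; have := hxbd (t'+s) i'; linarith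
      have hxdecomp : ∀ τ s (i' : Fin K),
          x (τ + (s + KK)) i' = ∑ j, (B ^ KK) i' j * x (τ + s) j := by
        intro τ s i'
        show (B ^ (τ + (s + KK))).mulVec c i' = _
        rw [show τ + (s + KK) = KK + (τ + s) by ring, pow_add, ← Matrix.mulVec_mulVec]
        rfl
      have hstepD : ∀ t t', N₀ ≤ t → N₀ ≤ t' → ∀ s,
          Ds t t' (s + KK) ≤ (1 - κ) * Ds t t' s + ε := by
        intro t t' ht ht' s
        apply Finset.sup'_le
        intro i' hi'T
        rw [hxdecomp t s i', hxdecomp t' s i', ← Finset.sum_sub_distrib]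
        have hterm : ∀ j, (B ^ KK) i' j * x (t+s) j - (B ^ KK) i' j * x (t'+s) j
            = (B ^ KK) i' j * (x (t+s) j - x (t'+s) j) := fun j => by ring
        rw [Finset.sum_congr rfl fun j _ => hterm j]
        have hsplit := Finset.sum_filter_add_sum_filter_not Finset.univ
          (fun j => ¬ Rec B j) (fun j => |(B ^ KK) i' j * (x (t+s) j - x (t'+s) j)|)
        calc |∑ j, (B ^ KK) i' j * (x (t+s) j - x (t'+s) j)|
            ≤ ∑ j, |(B ^ KK) i' j * (x (t+s) j - x (t'+s) j)| :=
              Finset.abs_sum_le_sum_abs _ _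
          _ = (∑ j ∈ T, |(B ^ KK) i' j * (x (t+s) j - x (t'+s) j)|)
              + ∑ j ∈ Finset.univ.filter (fun j => ¬¬ Rec B j),
                  |(B ^ KK) i' j * (x (t+s) j - x (t'+s) j)| := by
              rw [← hsplit]
          _ ≤ (1 - κ) * Ds t t' s + ε := by
              have hpart1 : ∑ j ∈ T, |(B ^ KK) i' j * (x (t+s) j - x (t'+s) j)|
                  ≤ (1 - κ) * Ds t t' s := by
                calc ∑ j ∈ T, |(B ^ KK) i' j * (x (t+s) j - x (t'+s) j)|
                    ≤ ∑ j ∈ T, (B ^ KK) i' j * Ds t t' s := by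
                      apply Finset.sum_le_sum
                      intro j hjT
                      rw [abs_mul, abs_of_nonneg ((stoch_pow hB KK).1 i' j)]
                      exact mul_le_mul_of_nonneg_left (hDsle t t' s j hjT)
                        ((stoch_pow hB KK).1 i' j)
                  _ = (∑ j ∈ T, (B ^ KK) i' j) * Ds t t' s := by rw [Finset.sum_mul]
                  _ ≤ (1 - κ) * Ds t t' s :=
                      mul_le_mul_of_nonneg_right (htransdecay i') (hDsnn t t' s)
              have hpart2 : ∑ j ∈ Finset.univ.filter (fun j => ¬¬ Rec B j),
                  |(B ^ KK) i' j * (x (t+s) j - x (t'+s) j)| ≤ ε := by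
                calc ∑ j ∈ Finset.univ.filter (fun j => ¬¬ Rec B j),
                    |(B ^ KK) i' j * (x (t+s) j - x (t'+s) j)|
                    ≤ ∑ j ∈ Finset.univ.filter (fun j => ¬¬ Rec B j), (B ^ KK) i' j * ε := by
                      apply Finset.sum_le_sum
                      intro j hj
                      have hrj : Rec B j := not_not.mp (Finset.mem_filter.mp hj).2
                      rw [abs_mul, abs_of_nonneg ((stoch_pow hB KK).1 i' j)]
                      apply mul_le_mul_of_nonneg_left _ ((stoch_pow hB KK).1 i' j)
                      exact hreceps j hrj (t+s) (t'+s) (by omega) (by omega)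
                  _ = (∑ j ∈ Finset.univ.filter (fun j => ¬¬ Rec B j), (B ^ KK) i' j) * ε := by
                      rw [Finset.sum_mul]
                  _ ≤ 1 * ε := by
                      apply mul_le_mul_of_nonneg_right _ (le_of_lt hεpos)
                      rw [← (stoch_pow hB KK).2 i']
                      exact Finset.sum_le_sum_of_subset_of_nonneg (Finset.filter_subset _ _)
                        (fun j _ _ => (stoch_pow hB KK).1 i' j)
                  _ = ε := one_mul ε
              linarith
      have hiter : ∀ t t', N₀ ≤ t → N₀ ≤ t' → ∀ r,
          Ds t t' (r * KK) ≤ (1 - κ) ^ r * (2 * Mc) + ε / κ := by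
        intro t t' ht ht' r
        induction r with
        | zero =>
            have h1 := hDsbd t t' 0
            have h2 : 0 ≤ ε / κ := le_of_lt (div_pos hεpos hκpos)
            have h4 : (0:ℕ) * KK = 0 := by omega
            rw [h4, pow_zero, one_mul]
            linarith
        | succ r ih =>
            have h1 : Ds t t' (r * KK + KK) ≤ (1 - κ) * Ds t t' (r * KK) + ε :=
              hstepD t t' ht ht' (r * KK)
            have h2 := mul_le_mul_of_nonneg_left ih (show (0:ℝ) ≤ 1 - κ by linarith)
            have h3 : (1-κ) * (ε/κ) + ε = ε/κ := by field_simp; ring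
            calc Ds t t' ((r+1) * KK) = Ds t t' (r * KK + KK) := by rw [add_mul, one_mul]
              _ ≤ (1-κ) * ((1-κ)^r * (2*Mc) + ε/κ) + ε := by linarith
              _ = (1-κ)^(r+1) * (2*Mc) + ((1-κ)*(ε/κ) + ε) := by ring
              _ = (1-κ)^(r+1) * (2*Mc) + ε/κ := by rw [h3]
      obtain ⟨r₀, hr₀⟩ : ∃ r₀, (1 - κ) ^ r₀ * (2 * Mc) < ε := by
        have h1 := (tendsto_pow_atTop_nhds_zero_of_lt_one
          (show (0:ℝ) ≤ 1 - κ by linarith) (show (1:ℝ) - κ < 1 by linarith)).mul_const (2 * Mc)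
        rw [zero_mul] at h1
        exact (h1.eventually (gt_mem_nhds hεpos)).exists
      refine ⟨N₀ + r₀ * KK, ?_⟩
      intro u hu v hv
      set t := u - r₀ * KK with ht
      set t' := v - r₀ * KK with ht'
      have hu' : u = t + r₀ * KK := by omega
      have hv' : v = t' + r₀ * KK := by omega
      have htN : N₀ ≤ t := by omega
      have ht'N : N₀ ≤ t' := by omega
      have hle : |x u i - x v i| ≤ (1-κ)^r₀ * (2*Mc) + ε/κ := by
        calc |x u i - x v i| = |x (t + r₀ * KK) i - x (t' + r₀ * KK) i| := by
              rw [← hu', ← hv']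
          _ ≤ Ds t t' (r₀ * KK) := hDsle t t' (r₀ * KK) i hiT
          _ ≤ (1-κ)^r₀ * (2*Mc) + ε/κ := hiter t t' htN ht'N r₀
      have hfinal : ε + ε/κ < ε' := by
        have heq : ε + ε/κ = ε' / 2 * ((κ + 1) / (κ + 1)) := by
          rw [hε]; field_simp
        rw [div_self (show κ + (1:ℝ) ≠ 0 by linarith), mul_one] at heq
        linarith
      rw [Real.dist_eq]
      calc |x u i - x v i| ≤ (1-κ)^r₀ * (2*Mc) + ε/κ := hle
        _ < ε + ε/κ := by linarith
        _ < ε' := hfinal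
    obtain ⟨li, hli⟩ := cauchySeq_tendsto_of_complete hcauchy
    exact ⟨li, hli⟩
  have hall : ∀ i : Fin K, ∃ li, Tendsto (fun t => x t i) atTop (𝓝 li) := by
    intro i
    by_cases h : Rec B i
    · exact ⟨lrec i, hlrec i h⟩
    · exact htrans i (by simp [hT, h])
  choose l hl using hall
  refine ⟨l, ?_⟩
  rw [tendsto_pi_nhds]
  exact hl

end lemN


lemma tendsto_pow_div_zero {r : ℝ} (h0 : 0 ≤ r) (h1 : r < 1) {m : ℕ} (hm : 0 < m) :
    Tendsto (fun t : ℕ => r ^ (t / m)) atTop (𝓝 0) := by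
  have hdiv : Tendsto (fun t : ℕ => t / m) atTop atTop := by
    apply Filter.tendsto_atTop_atTop.mpr
    intro b
    exact ⟨b * m, fun a ha => (Nat.le_div_iff_mul_le hm).mpr ha⟩
  exact (tendsto_pow_atTop_nhds_zero_of_lt_one h0 h1).comp hdiv

lemma summable_pow_div {r : ℝ} (h0 : 0 ≤ r) (h1 : r < 1) {m : ℕ} (hm : 0 < m) :
    Summable (fun t : ℕ => r ^ (t / m)) := by
  have hgeo : ∀ R : ℕ, ∑ s ∈ Finset.range R, r ^ s ≤ 1 / (1 - r) := by
    intro R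
    rw [geom_sum_eq (by linarith : r ≠ 1)]
    rw [show (r ^ R - 1) / (r - 1) = (1 - r ^ R) / (1 - r) by
      rw [div_eq_div_iff (by linarith) (by linarith)]; ring]
    rw [div_le_div_iff₀ (by linarith) (by linarith)]
    nlinarith [pow_nonneg h0 R]
  have hblock : ∀ R : ℕ, ∑ t ∈ Finset.range (m * R), r ^ (t / m)
      = m * ∑ s ∈ Finset.range R, r ^ s := by
    intro R
    induction R with
    | zero => simp
    | succ R ih =>
        rw [show m * (R + 1) = m * R + m by ring, Finset.sum_range_add, ih]
        have h2 : ∀ j ∈ Finset.range m, r ^ ((m * R + j) / m) = r ^ R := by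
          intro j hj
          congr 1
          rw [Nat.mul_add_div hm, Nat.div_eq_of_lt (Finset.mem_range.mp hj), add_zero]
        rw [Finset.sum_congr rfl h2, Finset.sum_const, Finset.card_range,
          Finset.sum_range_succ]
        push_cast
        ring
  apply summable_of_sum_range_le (c := m * (1 / (1 - r)))
    (fun t => pow_nonneg h0 _)
  intro T
  calc ∑ t ∈ Finset.range T, r ^ (t / m) ≤ ∑ t ∈ Finset.range (m * T), r ^ (t / m) := by
        apply Finset.sum_le_sum_of_subset_of_nonneg
        · apply Finset.range_subset_range.mpr
          exact Nat.le_mul_of_pos_left T hm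
        · intro t _ _; exact pow_nonneg h0 _
    _ = m * ∑ s ∈ Finset.range T, r ^ s := hblock T
    _ ≤ m * (1 / (1 - r)) := by
        apply mul_le_mul_of_nonneg_left (hgeo T) (by positivity)


theorem stmt19 {n K : ℕ} (C : Fin K → Finset (Fin n)) (hC : IsClustering C)
    (A : ℕ → Matrix (Fin n) (Fin n) ℝ)
    (hstoch : ∀ t, IsStochastic (A t))
    (e : ℝ) (he : 0 < e)
    (hB1 : ∀ t i j, A t i j = 0 ∨ e ≤ A t i j)
    (hB2 : ∀ t i, e ≤ A t i i)
    (B : Matrix (Fin K) (Fin K) ℝ) (hBstoch : IsStochastic B)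
    (hB3 : ∀ t p q, ∀ i ∈ C p, ∑ j ∈ C q, A t i j = B p q)
    (L : ℕ) (hL : 0 < L)
    (hspan : ∀ t, HasClusterSpanningTrees C (∑ s ∈ Finset.range L, A (t + s))) :
    ∀ x : Fin n → ℝ, ∃ y ∈ SC C,
      Tendsto (fun t : ℕ => (prodFrom A 0 (t + 1)).mulVec (x - y)) atTop (𝓝 0) := by
  classical
  intro x
  rcases Nat.eq_zero_or_pos n with hn0 | hn
  · subst hn0
    refine ⟨x, fun p i hi j hj => (Nat.not_lt_zero _ i.isLt).elim, ?_⟩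
    have hz : (fun t : ℕ => (prodFrom A 0 (t + 1)).mulVec (x - x)) = fun _ => 0 := by
      funext t; rw [sub_self, Matrix.mulVec_zero]
    rw [hz]; exact tendsto_const_nhds
  -- normalize e
  set e' : ℝ := min e (1/2) with he'def
  have he' : 0 < e' := lt_min he (by norm_num)
  have he'2 : e' ≤ 1/2 := min_le_right _ _
  have hB1' : ∀ t i j, A t i j = 0 ∨ e' ≤ A t i j := by
    intro t i j; rcases hB1 t i j with h | h
    · exact Or.inl h
    · exact Or.inr (le_trans (min_le_left _ _) h)
  have hB2' : ∀ t i, e' ≤ A t i i := fun t i => le_trans (min_le_left _ _) (hB2 t i)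
  -- cluster assignment function
  choose cl hcl using hC.2
  have huniq : ∀ i p, i ∈ C p → cl i = p := by
    intro i p hip
    by_contra hne
    exact (Finset.disjoint_left.mp (hC.1 _ _ hne) (hcl i)) hip
  have hK : 0 < K := (cl ⟨0, hn⟩).pos
  -- modified cluster matrix
  set Bh : Matrix (Fin K) (Fin K) ℝ :=
    Matrix.of (fun p q => if (C p).Nonempty then B p q else (if p = q then 1 else 0))
    with hBh
  have hBhapp : ∀ p q, Bh p q = if (C p).Nonempty then B p q else (if p = q then 1 else 0) :=
    fun p q => rfl
  have hBhne : ∀ p q, (C p).Nonempty → Bh p q = B p q := by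
    intro p q hne; rw [hBhapp, if_pos hne]
  have hBhstoch : IsStochastic Bh := by
    constructor
    · intro p q
      rw [hBhapp]
      by_cases hne : (C p).Nonempty
      · rw [if_pos hne]; exact hBstoch.1 p q
      · rw [if_neg hne]
        by_cases hpq : p = q
        · rw [if_pos hpq]; norm_num
        · rw [if_neg hpq]
    · intro p
      by_cases hne : (C p).Nonempty
      · rw [Finset.sum_congr rfl fun q _ => hBhne p q hne]; exact hBstoch.2 p
      · rw [Finset.sum_congr rfl fun q _ => by rw [hBhapp, if_neg hne]]
        simp
  have hBh1 : ∀ p q, Bh p q = 0 ∨ e' ≤ Bh p q := by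
    intro p q
    rw [hBhapp]
    by_cases hne : (C p).Nonempty
    · rw [if_pos hne]
      obtain ⟨i, hi⟩ := hne
      have hBpq : B p q = ∑ j ∈ C q, A 0 i j := (hB3 0 p q i hi).symm
      by_cases hall : ∀ j ∈ C q, A 0 i j = 0
      · left; rw [hBpq]; exact Finset.sum_eq_zero hall
      · right
        push_neg at hall
        obtain ⟨j, hj, hjne⟩ := hall
        have hje : e ≤ A 0 i j := by
          rcases hB1 0 i j with h | h
          · exact absurd h hjne
          · exact h
        rw [hBpq]
        calc e' ≤ e := min_le_left _ _
          _ ≤ A 0 i j := hje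
          _ ≤ ∑ j ∈ C q, A 0 i j :=
            Finset.single_le_sum (fun k _ => (hstoch 0).1 i k) hj
    · rw [if_neg hne]
      by_cases hpq : p = q
      · right; rw [if_pos hpq]; linarith
      · left; rw [if_neg hpq]
  have hBh2 : ∀ p, e' ≤ Bh p p := by
    intro p
    rw [hBhapp]
    by_cases hne : (C p).Nonempty
    · rw [if_pos hne]
      obtain ⟨i, hi⟩ := hne
      rw [(hB3 0 p p i hi).symm]
      calc e' ≤ e := min_le_left _ _
        _ ≤ A 0 i i := hB2 0 i
        _ ≤ ∑ j ∈ C p, A 0 i j :=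
          Finset.single_le_sum (fun k _ => (hstoch 0).1 i k) hi
    · rw [if_neg hne, if_pos rfl]; linarith
  have hCI : ∀ t, InterClusterCommonInfluence C (A t) := by
    intro t p q i hi i' hi'
    rw [hB3 t p q i hi, hB3 t p q i' hi']
  -- trajectory and oscillation bound
  set xt : ℕ → Fin n → ℝ := fun t => (prodFrom A 0 t).mulVec x with hxt
  obtain ⟨M0, hM0⟩ : ∃ M, ∀ i, |x i| ≤ M :=
    ⟨∑ i, |x i|, fun i => Finset.single_le_sum (fun j _ => abs_nonneg (x j)) (Finset.mem_univ i)⟩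
  have hM0nn : 0 ≤ M0 := le_trans (abs_nonneg _) (hM0 ⟨0, hn⟩)
  have hxtbd : ∀ t i, |xt t i| ≤ M0 := fun t i =>
    stoch_mulVec_bound (prodFrom_stoch hstoch 0 t) hM0 i
  set m := L * (n * n) with hm
  have hm1 : 0 < m := Nat.mul_pos hL (Nat.mul_pos hn hn)
  set γ : ℝ := e' ^ m with hγ
  have hγpos : 0 < γ := by positivity
  have hγ1 : γ < 1 := by
    calc γ ≤ e' ^ 1 := pow_le_pow_of_le_one (le_of_lt he') (by linarith) hm1
      _ = e' := pow_one e'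
      _ < 1 := by linarith
  set g : ℕ → ℝ := fun t => (1 - γ) ^ (t / m) * (2 * M0) with hg
  have hgnn : ∀ t, 0 ≤ g t := fun t => mul_nonneg (pow_nonneg (by linarith) _) (by linarith)
  have hosc : ∀ t p i j, i ∈ C p → j ∈ C p → |xt t i - xt t j| ≤ g t := by
    intro t p i j hi hj
    exact lemM hC hstoch he' he'2 hB1' hB2' hCI hL hspan hn x (by linarith)
      (fun p i hi j hj => by
        calc |x i - x j| ≤ |x i| + |x j| := abs_sub _ _
          _ ≤ 2 * M0 := by have := hM0 i; have := hM0 j; linarith)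
      t p i j hi hj
  have hgto0 : Tendsto g atTop (𝓝 0) := by
    have := (tendsto_pow_div_zero (by linarith : (0:ℝ) ≤ 1 - γ) (by linarith) hm1).mul_const
      (2 * M0)
    simpa [hg] using this
  have hgsummable : Summable g :=
    (summable_pow_div (by linarith : (0:ℝ) ≤ 1 - γ) (by linarith) hm1).mul_right (2 * M0)
  -- averages
  set a : ℕ → Fin K → ℝ := fun t p =>
    if h : (C p).Nonempty then (∑ i ∈ C p, xt t i) / (C p).card else 0 with ha
  have haapp_ne : ∀ t p, (C p).Nonempty → a t p = (∑ i ∈ C p, xt t i) / (C p).card := by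
    intro t p hne; rw [ha]; simp only [dif_pos hne]
  have haapp_e : ∀ t p, ¬ (C p).Nonempty → a t p = 0 := by
    intro t p hne; rw [ha]; simp only [dif_neg hne]
  have habd : ∀ t p, |a t p| ≤ M0 := by
    intro t p
    by_cases hne : (C p).Nonempty
    · rw [haapp_ne t p hne]
      have hcard : (0:ℝ) < (C p).card := by
        exact_mod_cast Finset.card_pos.mpr hne
      rw [abs_div, abs_of_pos hcard, div_le_iff₀ hcard]
      calc |∑ i ∈ C p, xt t i| ≤ ∑ i ∈ C p, |xt t i| := Finset.abs_sum_le_sum_abs _ _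
        _ ≤ ∑ _i ∈ C p, M0 := Finset.sum_le_sum fun i _ => hxtbd t i
        _ = M0 * (C p).card := by rw [Finset.sum_const, nsmul_eq_mul]; ring
    · rw [haapp_e t p hne, abs_zero]; exact hM0nn
  -- deviation from cluster average
  have hδ : ∀ t j, |xt t j - a t (cl j)| ≤ g t := by
    intro t j
    have hne : (C (cl j)).Nonempty := ⟨j, hcl j⟩
    have hcard : (0:ℝ) < (C (cl j)).card := by exact_mod_cast Finset.card_pos.mpr hne
    rw [haapp_ne t (cl j) hne]
    rw [show xt t j - (∑ i ∈ C (cl j), xt t i) / (C (cl j)).card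
        = (∑ i ∈ C (cl j), (xt t j - xt t i)) / (C (cl j)).card by
      rw [Finset.sum_sub_distrib, Finset.sum_const, nsmul_eq_mul]
      field_simp]
    rw [abs_div, abs_of_pos hcard, div_le_iff₀ hcard]
    calc |∑ i ∈ C (cl j), (xt t j - xt t i)| ≤ ∑ i ∈ C (cl j), |xt t j - xt t i| :=
          Finset.abs_sum_le_sum_abs _ _
      _ ≤ ∑ _i ∈ C (cl j), g t := Finset.sum_le_sum fun i hi =>
          hosc t (cl j) j i (hcl j) hi
      _ = g t * (C (cl j)).card := by rw [Finset.sum_const, nsmul_eq_mul]; ring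
  -- one-step recursion
  have hxtstep : ∀ t i, xt (t+1) i = ∑ j, A t i j * xt t j := by
    intro t i
    show (prodFrom A 0 (t+1)).mulVec x i = _
    show ((A (0 + t)) * prodFrom A 0 t).mulVec x i = _
    rw [← Matrix.mulVec_mulVec]
    simp only [Nat.zero_add]
    rfl
  have hEstep : ∀ t (i : Fin n), ∑ j, A t i j * a t (cl j) = Bh.mulVec (a t) (cl i) := by
    intro t i
    rw [cluster_sum hC (fun j => A t i j * a t (cl j))]
    have hinner : ∀ q, ∑ j ∈ C q, A t i j * a t (cl j) = Bh (cl i) q * a t q := by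
      intro q
      by_cases hne : (C q).Nonempty
      · have : ∀ j ∈ C q, A t i j * a t (cl j) = A t i j * a t q := by
          intro j hj; rw [huniq j q hj]
        rw [Finset.sum_congr rfl this, ← Finset.sum_mul, hB3 t (cl i) q i (hcl i),
          hBhne (cl i) q ⟨i, hcl i⟩]
      · have hCq : C q = ∅ := Finset.not_nonempty_iff_eq_empty.mp hne
        rw [hCq]
        have hBzero : B (cl i) q = 0 := by
          rw [← hB3 t (cl i) q i (hcl i), hCq]
          exact Finset.sum_empty
        rw [Finset.sum_empty, hBhne (cl i) q ⟨i, hcl i⟩, hBzero, zero_mul]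
    rw [Finset.sum_congr rfl fun q _ => hinner q]
    rfl
  -- η
  set η : ℕ → Fin K → ℝ := fun t p => a (t+1) p - Bh.mulVec (a t) p with hη
  have hrecur : ∀ t, a (t+1) = fun p => Bh.mulVec (a t) p + η t p := by
    intro t; funext p; rw [hη]; ring
  have hηbd : ∀ t p, |η t p| ≤ g t := by
    intro t p
    show |a (t+1) p - Bh.mulVec (a t) p| ≤ g t
    by_cases hne : (C p).Nonempty
    · have hcard : (0:ℝ) < (C p).card := by exact_mod_cast Finset.card_pos.mpr hne
      have hdecomp : ∀ i ∈ C p, xt (t+1) i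
          = Bh.mulVec (a t) p + ∑ j, A t i j * (xt t j - a t (cl j)) := by
        intro i hi
        have hcli : cl i = p := huniq i p hi
        rw [hxtstep t i]
        rw [show ∑ j, A t i j * xt t j
            = (∑ j, A t i j * a t (cl j)) + ∑ j, A t i j * (xt t j - a t (cl j)) by
          rw [← Finset.sum_add_distrib]
          exact Finset.sum_congr rfl fun j _ => by ring]
        rw [hEstep t i, hcli]
      have haval : a (t+1) p = Bh.mulVec (a t) p
          + (∑ i ∈ C p, ∑ j, A t i j * (xt t j - a t (cl j))) / (C p).card := by
        rw [haapp_ne (t+1) p hne, Finset.sum_congr rfl hdecomp, Finset.sum_add_distrib,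
          Finset.sum_const, nsmul_eq_mul, add_div, mul_comm ((C p).card : ℝ),
          mul_div_assoc, div_self (ne_of_gt hcard), mul_one]
      rw [haval]
      rw [show Bh.mulVec (a t) p + (∑ i ∈ C p, ∑ j, A t i j * (xt t j - a t (cl j))) / (C p).card
          - Bh.mulVec (a t) p = (∑ i ∈ C p, ∑ j, A t i j * (xt t j - a t (cl j))) / (C p).card
        by ring]
      rw [abs_div, abs_of_pos hcard, div_le_iff₀ hcard]
      calc |∑ i ∈ C p, ∑ j, A t i j * (xt t j - a t (cl j))|
          ≤ ∑ i ∈ C p, |∑ j, A t i j * (xt t j - a t (cl j))| :=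
            Finset.abs_sum_le_sum_abs _ _
        _ ≤ ∑ _i ∈ C p, g t := by
            apply Finset.sum_le_sum
            intro i _
            calc |∑ j, A t i j * (xt t j - a t (cl j))|
                ≤ ∑ j, |A t i j * (xt t j - a t (cl j))| := Finset.abs_sum_le_sum_abs _ _
              _ ≤ ∑ j, A t i j * g t := by
                  apply Finset.sum_le_sum
                  intro j _
                  rw [abs_mul, abs_of_nonneg ((hstoch t).1 i j)]
                  exact mul_le_mul_of_nonneg_left (hδ t j) ((hstoch t).1 i j)
              _ = g t := by rw [← Finset.sum_mul, (hstoch t).2 i, one_mul]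
        _ = g t * (C p).card := by rw [Finset.sum_const, nsmul_eq_mul]; ring
    · have hzero : ∀ t', a t' p = 0 := fun t' => haapp_e t' p hne
      have hBrow : ∀ q, Bh p q = if p = q then 1 else 0 := by
        intro q; rw [hBhapp, if_neg hne]
      have : Bh.mulVec (a t) p = a t p := by
        show ∑ q, Bh p q * a t q = a t p
        have hmul : ∀ q, (if p = q then (1:ℝ) else 0) * a t q = if p = q then a t q else 0 := by
          intro q; by_cases h : p = q <;> simp [h]
        rw [Finset.sum_congr rfl fun q _ => by rw [hBrow q, hmul q], Finset.sum_ite_eq,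
          if_pos (Finset.mem_univ p)]
      rw [this, hzero (t+1), hzero t, sub_zero, abs_zero]
      exact hgnn t
  -- limit matrix of powers of Bh
  have hBhpow := lemN hBhstoch he' he'2 hBh1 hBh2
  have hcol : ∀ q : Fin K, ∃ colq : Fin K → ℝ,
      ∀ p, Tendsto (fun h => (Bh ^ h) p q) atTop (𝓝 (colq p)) := by
    intro q
    obtain ⟨lq, hlq⟩ := hBhpow (Pi.single q 1)
    refine ⟨lq, fun p => ?_⟩
    have hp := (tendsto_pi_nhds.mp hlq) p
    have hform : ∀ h : ℕ, (Bh ^ h).mulVec (Pi.single q 1) p = (Bh ^ h) p q := by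
      intro h
      show ∑ r, (Bh ^ h) p r * (Pi.single q (1:ℝ) : Fin K → ℝ) r = _
      have hterm : ∀ r, (Bh ^ h) p r * (Pi.single q (1:ℝ) : Fin K → ℝ) r
          = if r = q then (Bh ^ h) p r else 0 := by
        intro r
        rw [Pi.single_apply]
        by_cases hrq : r = q <;> simp [hrq]
      rw [Finset.sum_congr rfl fun r _ => hterm r, Finset.sum_ite_eq',
        if_pos (Finset.mem_univ q)]
    have heqfun : (fun h => (Bh ^ h).mulVec (Pi.single q 1) p)
        = fun h => (Bh ^ h) p q := funext hform
    rw [← heqfun]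
    exact hp
  choose colfun hcolfun using hcol
  set Binf : Matrix (Fin K) (Fin K) ℝ := Matrix.of (fun p q => colfun q p) with hBinfdef
  have hBinfcol : ∀ p q, Tendsto (fun h => (Bh ^ h) p q) atTop (𝓝 (Binf p q)) :=
    fun p q => hcolfun q p
  have hBinfvec : ∀ (v : Fin K → ℝ) (p : Fin K),
      Tendsto (fun h => (Bh ^ h).mulVec v p) atTop (𝓝 (Binf.mulVec v p)) := by
    intro v p
    have hf : ∀ h : ℕ, (Bh ^ h).mulVec v p = ∑ q, (Bh ^ h) p q * v q := fun h => rfl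
    simp only [hf]
    show Tendsto _ _ (𝓝 (∑ q, Binf p q * v q))
    exact tendsto_finset_sum _ (fun q _ => (hBinfcol p q).mul_const (v q))
  have hBinfBh : ∀ (v : Fin K → ℝ) (p : Fin K),
      Binf.mulVec (Bh.mulVec v) p = Binf.mulVec v p := by
    intro v p
    have h1 : Tendsto (fun h : ℕ => (Bh ^ (h+1)).mulVec v p) atTop (𝓝 (Binf.mulVec v p)) :=
      (hBinfvec v p).comp (Filter.tendsto_add_atTop_nat 1)
    have h2 : ∀ h : ℕ, (Bh ^ (h+1)).mulVec v p = (Bh ^ h).mulVec (Bh.mulVec v) p := by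
      intro h
      rw [pow_succ, ← Matrix.mulVec_mulVec]
    simp only [h2] at h1
    exact tendsto_nhds_unique (hBinfvec (Bh.mulVec v) p) h1
  -- partial-sum representation of Binf.mulVec (a t)
  have hmulVecadd : ∀ (M : Matrix (Fin K) (Fin K) ℝ) (u v : Fin K → ℝ) (p : Fin K),
      M.mulVec (fun q => u q + v q) p = M.mulVec u p + M.mulVec v p := by
    intro M u v p
    show ∑ q, M p q * (u q + v q) = _
    rw [show (∑ q, M p q * (u q + v q)) = ∑ q, (M p q * u q + M p q * v q) from
      Finset.sum_congr rfl fun q _ => by ring, Finset.sum_add_distrib]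
    rfl
  have hβseq : ∀ t p, Binf.mulVec (a t) p
      = Binf.mulVec (a 0) p + ∑ s ∈ Finset.range t, Binf.mulVec (η s) p := by
    intro t p
    induction t with
    | zero => simp
    | succ t ih =>
        have hstep1 : Binf.mulVec (a (t+1)) p
            = Binf.mulVec (a t) p + Binf.mulVec (η t) p := by
          rw [hrecur t, hmulVecadd Binf (fun q => Bh.mulVec (a t) q) (fun q => η t q) p]
          congr 1
          exact hBinfBh (a t) p
        rw [hstep1, ih, Finset.sum_range_succ]
        ring
  have hηsum : ∀ p, Summable (fun s => Binf.mulVec (η s) p) := by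
    intro p
    apply Summable.of_norm_bounded (g := fun s => (∑ q, |Binf p q|) * g s)
      (hgsummable.mul_left _)
    intro s
    rw [Real.norm_eq_abs]
    show |∑ q, Binf p q * η s q| ≤ _
    calc |∑ q, Binf p q * η s q| ≤ ∑ q, |Binf p q * η s q| := Finset.abs_sum_le_sum_abs _ _
      _ ≤ ∑ q, |Binf p q| * g s := by
          apply Finset.sum_le_sum
          intro q _
          rw [abs_mul]
          exact mul_le_mul_of_nonneg_left (hηbd s q) (abs_nonneg _)
      _ = (∑ q, |Binf p q|) * g s := by rw [Finset.sum_mul]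
  have hβconv : ∀ p, ∃ βp, Tendsto (fun t => Binf.mulVec (a t) p) atTop (𝓝 βp) := by
    intro p
    refine ⟨Binf.mulVec (a 0) p + ∑' s, Binf.mulVec (η s) p, ?_⟩
    have h1 := (hηsum p).hasSum.tendsto_sum_nat
    have h2 := h1.const_add (Binf.mulVec (a 0) p)
    have heqfun : (fun t => Binf.mulVec (a 0) p + ∑ s ∈ Finset.range t, Binf.mulVec (η s) p)
        = fun t => Binf.mulVec (a t) p := by
      funext t; rw [← hβseq t p]
    rwa [heqfun] at h2
  choose βv hβv using hβconv
  -- drift estimate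
  have hatail : ∀ t h, ∀ p, |a (t+h) p - (Bh ^ h).mulVec (a t) p|
      ≤ ∑ s ∈ Finset.range h, g (t+s) := by
    intro t h
    induction h with
    | zero =>
        intro p
        simp [Matrix.one_mulVec]
    | succ h ih =>
        intro p
        have h1 : a (t+(h+1)) p = Bh.mulVec (a (t+h)) p + η (t+h) p := by
          rw [show t+(h+1) = (t+h)+1 by ring, hrecur (t+h)]
        have h2 : (Bh ^ (h+1)).mulVec (a t) p = Bh.mulVec ((Bh ^ h).mulVec (a t)) p := by
          rw [pow_succ', ← Matrix.mulVec_mulVec]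
        have h3 : Bh.mulVec (fun q => a (t+h) q - (Bh ^ h).mulVec (a t) q) p
            = Bh.mulVec (a (t+h)) p - Bh.mulVec ((Bh ^ h).mulVec (a t)) p := by
          have := Matrix.mulVec_sub Bh (a (t+h)) ((Bh ^ h).mulVec (a t))
          calc Bh.mulVec (fun q => a (t+h) q - (Bh ^ h).mulVec (a t) q) p
              = Bh.mulVec (a (t+h) - (Bh ^ h).mulVec (a t)) p := rfl
            _ = _ := by rw [this]; rfl
        have hd : a (t+(h+1)) p - (Bh ^ (h+1)).mulVec (a t) p
            = Bh.mulVec (fun q => a (t+h) q - (Bh ^ h).mulVec (a t) q) p + η (t+h) p := by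
          rw [h1, h2, h3]; ring
        rw [hd]
        calc |Bh.mulVec (fun q => a (t+h) q - (Bh ^ h).mulVec (a t) q) p + η (t+h) p|
            ≤ |Bh.mulVec (fun q => a (t+h) q - (Bh ^ h).mulVec (a t) q) p| + |η (t+h) p| :=
              abs_add_le _ _
          _ ≤ (∑ s ∈ Finset.range h, g (t+s)) + g (t+h) := by
              apply add_le_add _ (hηbd (t+h) p)
              exact stoch_mulVec_bound hBhstoch (fun q => ih q) p
          _ = ∑ s ∈ Finset.range (h+1), g (t+s) := (Finset.sum_range_succ _ h).symm
  -- tail of g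
  have hgtail : ∀ t h, ∑ s ∈ Finset.range h, g (t+s) ≤ ∑' s, g (s+t) := by
    intro t h
    have hsummable' : Summable (fun s => g (s+t)) := (summable_nat_add_iff t).mpr hgsummable
    have : ∀ s ∈ Finset.range h, g (t+s) = g (s+t) := fun s _ => by rw [Nat.add_comm]
    rw [Finset.sum_congr rfl this]
    exact Summable.sum_le_tsum (Finset.range h) (fun s _ => hgnn _) hsummable'
  have htail0 : Tendsto (fun t => ∑' s, g (s+t)) atTop (𝓝 0) := tendsto_sum_nat_add g
  -- convergence of a to βv
  have haconv : ∀ p, Tendsto (fun t => a t p) atTop (𝓝 (βv p)) := by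
    intro p
    rw [Metric.tendsto_atTop]
    intro ε hε
    obtain ⟨t₀, ht₀a, ht₀b⟩ : ∃ t₀, (∑' s, g (s+t₀)) < ε/4 ∧
        |Binf.mulVec (a t₀) p - βv p| < ε/4 := by
      have h1 := (Metric.tendsto_atTop.mp htail0) (ε/4) (by linarith)
      have h2 := (Metric.tendsto_atTop.mp (hβv p)) (ε/4) (by linarith)
      obtain ⟨N1, hN1⟩ := h1
      obtain ⟨N2, hN2⟩ := h2
      refine ⟨max N1 N2, ?_, ?_⟩
      · have := hN1 (max N1 N2) (le_max_left _ _)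
        rw [Real.dist_eq] at this
        have h0 : (0:ℝ) ≤ ∑' s, g (s + max N1 N2) :=
          tsum_nonneg (fun s => hgnn _)
        calc (∑' s, g (s + max N1 N2)) = |∑' s, g (s + max N1 N2) - 0| := by
              rw [sub_zero, abs_of_nonneg h0]
          _ < ε/4 := this
      · have := hN2 (max N1 N2) (le_max_right _ _)
        rwa [Real.dist_eq] at this
    obtain ⟨H, hH⟩ := (Metric.tendsto_atTop.mp (hBinfvec (a t₀) p)) (ε/4) (by linarith)
    refine ⟨t₀ + H, ?_⟩
    intro τ hτ
    set h := τ - t₀ with hh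
    have hτeq : τ = t₀ + h := by omega
    have hhH : H ≤ h := by omega
    rw [Real.dist_eq]
    have e1 : |a (t₀+h) p - (Bh ^ h).mulVec (a t₀) p| ≤ ∑' s, g (s+t₀) :=
      le_trans (hatail t₀ h p) (hgtail t₀ h)
    have e2 : |(Bh ^ h).mulVec (a t₀) p - Binf.mulVec (a t₀) p| < ε/4 := by
      have := hH h hhH
      rwa [Real.dist_eq] at this
    calc |a τ p - βv p| = |(a (t₀+h) p - (Bh ^ h).mulVec (a t₀) p)
          + ((Bh ^ h).mulVec (a t₀) p - Binf.mulVec (a t₀) p)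
          + (Binf.mulVec (a t₀) p - βv p)| := by rw [hτeq]; ring_nf
      _ ≤ |a (t₀+h) p - (Bh ^ h).mulVec (a t₀) p|
          + |(Bh ^ h).mulVec (a t₀) p - Binf.mulVec (a t₀) p|
          + |Binf.mulVec (a t₀) p - βv p| := abs_add_three _ _ _
      _ < ε/4 + ε/4 + ε/4 := by
          apply add_lt_add_of_lt_of_le _ (le_of_lt ht₀b)
          apply add_lt_add_of_le_of_lt (le_trans e1 (le_of_lt ht₀a)) e2
      _ < ε := by linarith
  -- βv is a fixed point of Bh
  have hβfix : Bh.mulVec βv = βv := by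
    funext p
    have h1 : Tendsto (fun t => a (t+1) p) atTop (𝓝 (βv p)) :=
      (haconv p).comp (Filter.tendsto_add_atTop_nat 1)
    have h2 : Tendsto (fun t => Bh.mulVec (a t) p + η t p) atTop (𝓝 (Bh.mulVec βv p + 0)) := by
      apply Filter.Tendsto.add
      · show Tendsto (fun t => ∑ q, Bh p q * a t q) atTop (𝓝 (∑ q, Bh p q * βv q))
        exact tendsto_finset_sum _ (fun q _ => (haconv q).const_mul (Bh p q))
      · apply squeeze_zero_norm (fun t => ?_) hgto0
        rw [Real.norm_eq_abs]
        exact hηbd t p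
    rw [add_zero] at h2
    have heq : (fun t => a (t+1) p) = fun t => Bh.mulVec (a t) p + η t p := by
      funext t; rw [hrecur t]
    rw [heq] at h1
    exact (tendsto_nhds_unique h1 h2).symm
  have hβpow : ∀ h, (Bh ^ h).mulVec βv = βv := by
    intro h
    induction h with
    | zero => rw [pow_zero, Matrix.one_mulVec]
    | succ h ih => rw [pow_succ, ← Matrix.mulVec_mulVec, hβfix, ih]
  -- the consensus vector
  set y : Fin n → ℝ := fun i => βv (cl i) with hy
  have hySC : y ∈ SC C := by
    intro p i hi j hj
    rw [hy]
    show βv (cl i) = βv (cl j)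
    rw [huniq i p hi, huniq j p hj]
  refine ⟨y, hySC, ?_⟩
  -- action of products on cluster-constant vectors
  have hEone : ∀ t (c : Fin K → ℝ), (A t).mulVec (fun i => c (cl i))
      = fun i => Bh.mulVec c (cl i) := by
    intro t c
    funext i
    show ∑ j, A t i j * c (cl j) = _
    rw [cluster_sum hC (fun j => A t i j * c (cl j))]
    have hinner : ∀ q, ∑ j ∈ C q, A t i j * c (cl j) = Bh (cl i) q * c q := by
      intro q
      by_cases hne : (C q).Nonempty
      · rw [Finset.sum_congr rfl (fun j hj => by rw [huniq j q hj]), ← Finset.sum_mul,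
          hB3 t (cl i) q i (hcl i), hBhne (cl i) q ⟨i, hcl i⟩]
      · have hCq : C q = ∅ := Finset.not_nonempty_iff_eq_empty.mp hne
        have hBzero : B (cl i) q = 0 := by
          rw [← hB3 t (cl i) q i (hcl i), hCq, Finset.sum_empty]
        rw [hCq, Finset.sum_empty, hBhne (cl i) q ⟨i, hcl i⟩, hBzero, zero_mul]
    rw [Finset.sum_congr rfl fun q _ => hinner q]
    rfl
  have hEprod : ∀ h (c : Fin K → ℝ), (prodFrom A 0 h).mulVec (fun i => c (cl i))
      = fun i => (Bh ^ h).mulVec c (cl i) := by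
    intro h c
    induction h generalizing c with
    | zero =>
        rw [show prodFrom A 0 0 = 1 from rfl, Matrix.one_mulVec, pow_zero]
        funext i
        rw [Matrix.one_mulVec]
    | succ h ih =>
        have hsplit : prodFrom A 0 (h+1) = A (0+h) * prodFrom A 0 h := rfl
        rw [hsplit, ← Matrix.mulVec_mulVec, ih c, hEone (0+h) ((Bh ^ h).mulVec c)]
        funext i
        rw [Matrix.mulVec_mulVec, ← pow_succ']
  have hPrody : ∀ h, (prodFrom A 0 h).mulVec y = y := by
    intro h
    rw [hy]
    show (prodFrom A 0 h).mulVec (fun i => βv (cl i)) = _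
    rw [hEprod h βv, hβpow h]
  -- final limit
  rw [tendsto_pi_nhds]
  intro i
  have hfinal : ∀ t : ℕ, (prodFrom A 0 (t+1)).mulVec (x - y) i
      = (xt (t+1) i - a (t+1) (cl i)) + (a (t+1) (cl i) - βv (cl i)) := by
    intro t
    rw [Matrix.mulVec_sub, hPrody (t+1)]
    show xt (t+1) i - y i = _
    rw [hy]
    ring
  simp only [hfinal, Pi.zero_apply]
  rw [show (0:ℝ) = 0 + 0 by norm_num]
  apply Filter.Tendsto.add
  · apply squeeze_zero_norm (fun t => ?_) (hgto0.comp (Filter.tendsto_add_atTop_nat 1))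
    rw [Real.norm_eq_abs]
    exact hδ (t+1) i
  · have := ((haconv (cl i)).comp (Filter.tendsto_add_atTop_nat 1)).sub_const (βv (cl i))
    simpa using this
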